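/- arXiv:1812.09038 — 4 statements merged into one kernel-verified Lean document; each statement's English description precedes it below -/
import Mathlib

section
/- The matching M that arises from {u_i t_i : i ∈ [n]} by adding, for each j ∈ [m], an edge between v_j and one of its neighbors in C_j, is a uniquely restricted matching in G(Γ) of size n+m; indeed, every edge of M is a pendant edge in G(M). -/
open SimpleGraph

/-- The subgraph of `G` consisting of those pairs in `s` that are actually edges of `G`. -/
def pairsSubgraph {V : Type*} (G : SimpleGraph V) (s : Set (V × V)) : G.Subgraph where
  verts := {v | ∃ a b, (G.Adj a b ∧ ((a, b) ∈ s ∨ (b, a) ∈ s)) ∧ (v = a ∨ v = b)}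
  Adj a b := G.Adj a b ∧ ((a, b) ∈ s ∨ (b, a) ∈ s)
  adj_sub h := h.1
  edge_vert h := ⟨_, _, h, Or.inl rfl⟩
  symm := ⟨fun _ _ h => ⟨h.1.symm, h.2.symm⟩⟩

/-- `M` is an induced matching in `G`: it is a matching, and `G(M)`, the subgraph of `G`
induced by the set `V(M)` of covered vertices (which is `M.verts` for a matching subgraph),
is `1`-regular, i.e. every vertex of `G(M)` has exactly one neighbour in `G(M)`. -/
def IsInducedMatching {V : Type*} (G : SimpleGraph V) (M : G.Subgraph) : Prop :=
  M.IsMatching ∧ ∀ v : M.verts, ∃! w : M.verts, (G.induce M.verts).Adj v w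

/-- `M` is an acyclic matching in `G`: it is a matching and `G(M)` is a forest. -/
def IsAcyclicMatching {V : Type*} (G : SimpleGraph V) (M : G.Subgraph) : Prop :=
  M.IsMatching ∧ (G.induce M.verts).IsAcyclic

/-- `M` is a uniquely restricted matching in `G`: it is a matching and it is the unique
perfect matching of `G(M)`, i.e. the unique matching of `G` covering exactly `M.verts`. -/
def IsURMatching {V : Type*} (G : SimpleGraph V) (M : G.Subgraph) : Prop :=
  M.IsMatching ∧ ∀ M' : G.Subgraph, M'.IsMatching → M'.verts = M.verts → M' = M

/-- The (ordinary) matching number `ν(G)`: the maximum cardinality of a matching in `G`. -/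
noncomputable def nuMatch {V : Type*} (G : SimpleGraph V) : ℕ :=
  sSup {k : ℕ | ∃ M : G.Subgraph, M.IsMatching ∧ M.edgeSet.ncard = k}

/-- The uniquely restricted matching number `ν_ur(G)`. -/
noncomputable def nuUR {V : Type*} (G : SimpleGraph V) : ℕ :=
  sSup {k : ℕ | ∃ M : G.Subgraph, IsURMatching G M ∧ M.edgeSet.ncard = k}

/-- The acyclic matching number `ν_ac(G)`. -/
noncomputable def nuAc {V : Type*} (G : SimpleGraph V) : ℕ :=
  sSup {k : ℕ | ∃ M : G.Subgraph, IsAcyclicMatching G M ∧ M.edgeSet.ncard = k}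

/-- The induced (strong) matching number `ν_s(G)`. -/
noncomputable def nuS {V : Type*} (G : SimpleGraph V) : ℕ :=
  sSup {k : ℕ | ∃ M : G.Subgraph, IsInducedMatching G M ∧ M.edgeSet.ncard = k}

/-- `cyc` is an `M`-alternating cycle in `G`: a cycle of `G` whose edges alternate between
edges of `M` and edges of `E(G) \ M`. -/
def IsAltCycle {V : Type*} (G : SimpleGraph V) (M : G.Subgraph) {v : V}
    (cyc : G.Walk v v) : Prop :=
  cyc.IsCycle ∧ cyc.toSubgraph.spanningCoe.IsAlternating M.spanningCoe

/-- Vertices of the graph `G(Γ)` for the EXACT SATISFIABILITY instance `Γ` with `n` variables and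
`m` clauses (all literals positive): `Sum.inl (i, 0) = t_i`, `Sum.inl (i, 1) = f_i`,
`Sum.inl (i, 2) = u_i` are the vertices of the star `X_i ≅ K_{1,2}` with centre `u_i`;
`Sum.inr (j, none) = v_j` is the centre of the star `C_j ≅ K_{1,3}` and `Sum.inr (j, some i)` is
the leaf of `C_j` identified with the literal `x_i` (it is isolated unless `x_i ∈ c_j`). -/
abbrev XSatV (n m : ℕ) : Type := (Fin n × Fin 3) ⊕ (Fin m × Option (Fin n))

/-- The base relation for `G(Γ)`: the star edges `u_i f_i`, `u_i t_i` and `v_j w` for each leaf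
`w` of `C_j`; an edge from `f_i` to every vertex of `W` (the leaves identified with the literal
`x_i`), and an edge from `t_i` to every vertex of `W'` (the leaves of those stars `C_j` that meet
`W`, which are not in `W`). -/
def xsatRel {n m : ℕ} (c : Fin m → Finset (Fin n)) : XSatV n m → XSatV n m → Prop
  | Sum.inl (i, k), Sum.inl (i', k') => i = i' ∧ k = 2 ∧ k' ≠ 2
  | Sum.inr (j, o), Sum.inr (j', o') => j = j' ∧ o = none ∧ ∃ i, o' = some i ∧ i ∈ c j
  | Sum.inl (i, k), Sum.inr (j, o) =>
      (k = 1 ∧ o = some i ∧ i ∈ c j) ∨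
      (k = 0 ∧ ∃ i', o = some i' ∧ i' ∈ c j ∧ i ∈ c j ∧ i' ≠ i)
  | Sum.inr _, Sum.inl _ => False

/-- The graph `G(Γ)` built from the EXACT SATISFIABILITY instance `Γ` whose clauses are given
by `c`. -/
def xsatGraph {n m : ℕ} (c : Fin m → Finset (Fin n)) : SimpleGraph (XSatV n m) :=
  SimpleGraph.fromRel (xsatRel c)

/-- The matching arising from `{u_i t_i : i ∈ [n]}` by adding, for each `j ∈ [m]`, the edge
between `v_j` and its neighbour `Sum.inr (j, some (g j))` in `C_j`. -/
def M11 {n m : ℕ} (c : Fin m → Finset (Fin n)) (g : Fin m → Fin n) : (xsatGraph c).Subgraph :=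
  pairsSubgraph (xsatGraph c)
    ({pr | ∃ i : Fin n, pr = (Sum.inl (i, 2), Sum.inl (i, 0))} ∪
     {pr | ∃ j : Fin m, pr = (Sum.inr (j, none), Sum.inr (j, some (g j)))})

section Helpers

variable {n m : ℕ} {c : Fin m → Finset (Fin n)} {g : Fin m → Fin n}

/-- The edge `u_i t_i` is an edge of `G(Γ)`. -/
lemma xsat_adj_ut (i : Fin n) :
    (xsatGraph c).Adj (Sum.inl (i, 2)) (Sum.inl (i, 0)) := by
  rw [xsatGraph, fromRel_adj]
  refine ⟨by simp, Or.inl ?_⟩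
  simp [xsatRel]

/-- The edge `v_j w_j` is an edge of `G(Γ)`. -/
lemma xsat_adj_vw (j : Fin m) (hg : g j ∈ c j) :
    (xsatGraph c).Adj (Sum.inr (j, none)) (Sum.inr (j, some (g j))) := by
  rw [xsatGraph, fromRel_adj]
  exact ⟨by simp, Or.inl ⟨rfl, rfl, g j, rfl, hg⟩⟩

/-- The only neighbours of `u_i` in `G(Γ)` are `t_i` and `f_i`. -/
lemma xsat_adj_u {i : Fin n} {x : XSatV n m}
    (h : (xsatGraph c).Adj (Sum.inl (i, 2)) x) :
    x = Sum.inl (i, 0) ∨ x = Sum.inl (i, 1) := by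
  rw [xsatGraph, fromRel_adj] at h
  obtain ⟨hne, h | h⟩ := h <;> rcases x with ⟨i', k'⟩ | ⟨j, o⟩
  · obtain ⟨h1, -, h3⟩ := h
    subst h1
    have hk : ∀ k : Fin 3, k ≠ 2 → k = 0 ∨ k = 1 := by decide
    rcases hk k' h3 with rfl | rfl
    · exact Or.inl rfl
    · exact Or.inr rfl
  · rcases h with ⟨h, -⟩ | ⟨h, -⟩ <;> exact absurd h (by decide)
  · obtain ⟨-, -, h3⟩ := h
    exact absurd rfl h3
  · exact h.elim

/-- The only neighbours of `v_j` in `G(Γ)` are the leaves of `C_j`. -/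
lemma xsat_adj_v {j : Fin m} {x : XSatV n m}
    (h : (xsatGraph c).Adj (Sum.inr (j, none)) x) :
    ∃ i, x = Sum.inr (j, some i) ∧ i ∈ c j := by
  rw [xsatGraph, fromRel_adj] at h
  obtain ⟨hne, h | h⟩ := h <;> rcases x with ⟨i', k'⟩ | ⟨j', o⟩
  · exact h.elim
  · obtain ⟨h1, -, i, hi, hic⟩ := h
    subst h1; subst hi
    exact ⟨i, rfl, hic⟩
  · rcases h with ⟨-, h, -⟩ | ⟨-, i'', h, -⟩ <;> simp at h
  · obtain ⟨-, -, i'', h, -⟩ := h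
    simp at h

/-- Characterisation of the adjacency relation of `M11`. -/
lemma m11_adj {a b : XSatV n m} (hg : ∀ j, g j ∈ c j) :
    (M11 c g).Adj a b ↔
      (∃ i : Fin n, (a = Sum.inl (i, 2) ∧ b = Sum.inl (i, 0)) ∨
        (a = Sum.inl (i, 0) ∧ b = Sum.inl (i, 2))) ∨
      (∃ j : Fin m, (a = Sum.inr (j, none) ∧ b = Sum.inr (j, some (g j))) ∨
        (a = Sum.inr (j, some (g j)) ∧ b = Sum.inr (j, none))) := by
  constructor
  · rintro ⟨-, h | h⟩ <;>
      rcases h with ⟨i, hi⟩ | ⟨j, hj⟩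
    · rw [Prod.ext_iff] at hi
      exact Or.inl ⟨i, Or.inl hi⟩
    · rw [Prod.ext_iff] at hj
      exact Or.inr ⟨j, Or.inl hj⟩
    · rw [Prod.ext_iff] at hi
      exact Or.inl ⟨i, Or.inr ⟨hi.2, hi.1⟩⟩
    · rw [Prod.ext_iff] at hj
      exact Or.inr ⟨j, Or.inr ⟨hj.2, hj.1⟩⟩
  · rintro (⟨i, ⟨ha, hb⟩ | ⟨ha, hb⟩⟩ | ⟨j, ⟨ha, hb⟩ | ⟨ha, hb⟩⟩) <;> subst ha <;> subst hb
    · exact ⟨xsat_adj_ut i, Or.inl (Or.inl ⟨i, rfl⟩)⟩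
    · exact ⟨(xsat_adj_ut i).symm, Or.inr (Or.inl ⟨i, rfl⟩)⟩
    · exact ⟨xsat_adj_vw j (hg j), Or.inl (Or.inr ⟨j, rfl⟩)⟩
    · exact ⟨(xsat_adj_vw j (hg j)).symm, Or.inr (Or.inr ⟨j, rfl⟩)⟩

/-- Characterisation of the vertex set of `M11`. -/
lemma m11_verts {x : XSatV n m} (hg : ∀ j, g j ∈ c j) :
    x ∈ (M11 c g).verts ↔
      (∃ i : Fin n, x = Sum.inl (i, 2) ∨ x = Sum.inl (i, 0)) ∨
      (∃ j : Fin m, x = Sum.inr (j, none) ∨ x = Sum.inr (j, some (g j))) := by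
  constructor
  · rintro ⟨a, b, hab, hx⟩
    have h := (m11_adj (g := g) hg).1 hab
    rcases h with ⟨i, ⟨ha, hb⟩ | ⟨ha, hb⟩⟩ | ⟨j, ⟨ha, hb⟩ | ⟨ha, hb⟩⟩ <;>
      subst ha <;> subst hb <;>
      rcases hx with rfl | rfl
    · exact Or.inl ⟨i, Or.inl rfl⟩
    · exact Or.inl ⟨i, Or.inr rfl⟩
    · exact Or.inl ⟨i, Or.inr rfl⟩
    · exact Or.inl ⟨i, Or.inl rfl⟩
    · exact Or.inr ⟨j, Or.inl rfl⟩
    · exact Or.inr ⟨j, Or.inr rfl⟩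
    · exact Or.inr ⟨j, Or.inr rfl⟩
    · exact Or.inr ⟨j, Or.inl rfl⟩
  · rintro (⟨i, rfl | rfl⟩ | ⟨j, rfl | rfl⟩)
    · exact (M11 c g).edge_vert ((m11_adj hg).2 (Or.inl ⟨i, Or.inl ⟨rfl, rfl⟩⟩))
    · exact (M11 c g).edge_vert ((m11_adj hg).2 (Or.inl ⟨i, Or.inr ⟨rfl, rfl⟩⟩))
    · exact (M11 c g).edge_vert ((m11_adj hg).2 (Or.inr ⟨j, Or.inl ⟨rfl, rfl⟩⟩))
    · exact (M11 c g).edge_vert ((m11_adj hg).2 (Or.inr ⟨j, Or.inr ⟨rfl, rfl⟩⟩))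

/-- `f_i` is not covered by `M11`. -/
lemma f_not_mem (hg : ∀ j, g j ∈ c j) (i : Fin n) :
    Sum.inl (i, 1) ∉ (M11 c g).verts := by
  rw [m11_verts hg]
  rintro (⟨i', h | h⟩ | ⟨j, h | h⟩) <;> simp_all

/-- The only leaves of clause stars covered by `M11` are the `w_j = (j, some (g j))`. -/
lemma leaf_mem (hg : ∀ j, g j ∈ c j) {j : Fin m} {i : Fin n}
    (h : (Sum.inr (j, some i) : XSatV n m) ∈ (M11 c g).verts) : i = g j := by
  rw [m11_verts hg] at h
  rcases h with ⟨i', h | h⟩ | ⟨j', h | h⟩ <;> simp_all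

/-- `M11` is a matching. -/
lemma m11_isMatching (hg : ∀ j, g j ∈ c j) : (M11 c g).IsMatching := by
  intro v hv
  rw [m11_verts hg] at hv
  have hk02 : ((2 : Fin 3) = 0) = False := by simp
  rcases hv with ⟨i, rfl | rfl⟩ | ⟨j, rfl | rfl⟩
  · refine ⟨Sum.inl (i, 0), (m11_adj hg).2 (Or.inl ⟨i, Or.inl ⟨rfl, rfl⟩⟩), ?_⟩
    intro y hy
    rcases (m11_adj hg).1 hy with ⟨i', ⟨h1, h2⟩ | ⟨h1, h2⟩⟩ | ⟨j', ⟨h1, h2⟩ | ⟨h1, h2⟩⟩ <;>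
      simp_all
  · refine ⟨Sum.inl (i, 2), (m11_adj hg).2 (Or.inl ⟨i, Or.inr ⟨rfl, rfl⟩⟩), ?_⟩
    intro y hy
    rcases (m11_adj hg).1 hy with ⟨i', ⟨h1, h2⟩ | ⟨h1, h2⟩⟩ | ⟨j', ⟨h1, h2⟩ | ⟨h1, h2⟩⟩ <;>
      simp_all
  · refine ⟨Sum.inr (j, some (g j)), (m11_adj hg).2 (Or.inr ⟨j, Or.inl ⟨rfl, rfl⟩⟩), ?_⟩
    intro y hy
    rcases (m11_adj hg).1 hy with ⟨i', ⟨h1, h2⟩ | ⟨h1, h2⟩⟩ | ⟨j', ⟨h1, h2⟩ | ⟨h1, h2⟩⟩ <;>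
      simp_all
  · refine ⟨Sum.inr (j, none), (m11_adj hg).2 (Or.inr ⟨j, Or.inr ⟨rfl, rfl⟩⟩), ?_⟩
    intro y hy
    rcases (m11_adj hg).1 hy with ⟨i', ⟨h1, h2⟩ | ⟨h1, h2⟩⟩ | ⟨j', ⟨h1, h2⟩ | ⟨h1, h2⟩⟩ <;>
      simp_all

/-- `u_i` is a pendant vertex of `G(M11)`. -/
lemma pendant_u (hg : ∀ j, g j ∈ c j) (i : Fin n)
    (h : (Sum.inl (i, 2) : XSatV n m) ∈ (M11 c g).verts) :
    ∃! w, ((xsatGraph c).induce (M11 c g).verts).Adj ⟨Sum.inl (i, 2), h⟩ w := by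
  have hmem : (Sum.inl (i, 0) : XSatV n m) ∈ (M11 c g).verts :=
    (m11_verts hg).2 (Or.inl ⟨i, Or.inr rfl⟩)
  refine ⟨⟨Sum.inl (i, 0), hmem⟩, xsat_adj_ut i, ?_⟩
  rintro ⟨y, hy⟩ hadj
  have : (xsatGraph c).Adj (Sum.inl (i, 2)) y := hadj
  rcases xsat_adj_u this with rfl | rfl
  · rfl
  · exact absurd hy (f_not_mem hg i)

/-- `v_j` is a pendant vertex of `G(M11)`. -/
lemma pendant_v (hg : ∀ j, g j ∈ c j) (j : Fin m)
    (h : (Sum.inr (j, none) : XSatV n m) ∈ (M11 c g).verts) :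
    ∃! w, ((xsatGraph c).induce (M11 c g).verts).Adj ⟨Sum.inr (j, none), h⟩ w := by
  have hmem : (Sum.inr (j, some (g j)) : XSatV n m) ∈ (M11 c g).verts :=
    (m11_verts hg).2 (Or.inr ⟨j, Or.inr rfl⟩)
  refine ⟨⟨Sum.inr (j, some (g j)), hmem⟩, xsat_adj_vw j (hg j), ?_⟩
  rintro ⟨y, hy⟩ hadj
  have : (xsatGraph c).Adj (Sum.inr (j, none)) y := hadj
  obtain ⟨i, rfl, hic⟩ := xsat_adj_v this
  have := leaf_mem hg hy
  subst this
  rfl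

/-- `M11` is the unique matching covering its vertex set. -/
lemma m11_unique (hg : ∀ j, g j ∈ c j) (M' : (xsatGraph c).Subgraph)
    (hM' : M'.IsMatching) (hV : M'.verts = (M11 c g).verts) : M' = M11 c g := by
  have hut : ∀ i : Fin n, M'.Adj (Sum.inl (i, 2)) (Sum.inl (i, 0)) := by
    intro i
    have hmem : (Sum.inl (i, 2) : XSatV n m) ∈ M'.verts := by
      rw [hV]; exact (m11_verts hg).2 (Or.inl ⟨i, Or.inl rfl⟩)
    obtain ⟨w, hw, -⟩ := hM' hmem
    rcases xsat_adj_u (M'.adj_sub hw) with rfl | rfl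
    · exact hw
    · have : (Sum.inl (i, 1) : XSatV n m) ∈ M'.verts := M'.edge_vert hw.symm
      rw [hV] at this
      exact absurd this (f_not_mem hg i)
  have hvw : ∀ j : Fin m, M'.Adj (Sum.inr (j, none)) (Sum.inr (j, some (g j))) := by
    intro j
    have hmem : (Sum.inr (j, none) : XSatV n m) ∈ M'.verts := by
      rw [hV]; exact (m11_verts hg).2 (Or.inr ⟨j, Or.inl rfl⟩)
    obtain ⟨w, hw, -⟩ := hM' hmem
    obtain ⟨i, rfl, hic⟩ := xsat_adj_v (M'.adj_sub hw)
    have : (Sum.inr (j, some i) : XSatV n m) ∈ M'.verts := M'.edge_vert hw.symm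
    rw [hV] at this
    have := leaf_mem hg this
    subst this
    exact hw
  refine Subgraph.ext hV ?_
  funext a b
  refine propext ⟨fun h => ?_, fun h => ?_⟩
  · have hmem : a ∈ M'.verts := M'.edge_vert h
    rw [hV, m11_verts hg] at hmem
    rcases hmem with ⟨i, rfl | rfl⟩ | ⟨j, rfl | rfl⟩
    · obtain ⟨w, -, huniq⟩ := hM' (M'.edge_vert h)
      have hb := (huniq b h).trans (huniq _ (hut i)).symm
      subst hb
      exact (m11_adj hg).2 (Or.inl ⟨i, Or.inl ⟨rfl, rfl⟩⟩)
    · obtain ⟨w, -, huniq⟩ := hM' (M'.edge_vert h)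
      have hb := (huniq b h).trans (huniq _ (hut i).symm).symm
      subst hb
      exact (m11_adj hg).2 (Or.inl ⟨i, Or.inr ⟨rfl, rfl⟩⟩)
    · obtain ⟨w, -, huniq⟩ := hM' (M'.edge_vert h)
      have hb := (huniq b h).trans (huniq _ (hvw j)).symm
      subst hb
      exact (m11_adj hg).2 (Or.inr ⟨j, Or.inl ⟨rfl, rfl⟩⟩)
    · obtain ⟨w, -, huniq⟩ := hM' (M'.edge_vert h)
      have hb := (huniq b h).trans (huniq _ (hvw j).symm).symm
      subst hb
      exact (m11_adj hg).2 (Or.inr ⟨j, Or.inr ⟨rfl, rfl⟩⟩)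
  · rcases (m11_adj hg).1 h with ⟨i, ⟨rfl, rfl⟩ | ⟨rfl, rfl⟩⟩ | ⟨j, ⟨rfl, rfl⟩ | ⟨rfl, rfl⟩⟩
    · exact hut i
    · exact (hut i).symm
    · exact hvw j
    · exact (hvw j).symm

/-- The edge set of `M11`. -/
lemma m11_edgeSet (hg : ∀ j, g j ∈ c j) : (M11 c g).edgeSet =
    (fun i : Fin n => s(Sum.inl (i, 2), (Sum.inl (i, 0) : XSatV n m))) '' Set.univ ∪
    (fun j : Fin m => s(Sum.inr (j, none), (Sum.inr (j, some (g j)) : XSatV n m))) ''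
      Set.univ := by
  ext e
  induction e with
  | _ a b =>
    rw [Subgraph.mem_edgeSet, m11_adj hg]
    simp only [Set.mem_union, Set.mem_image, Set.mem_univ, true_and, Sym2.eq_iff]
    constructor
    · rintro (⟨i, ⟨rfl, rfl⟩ | ⟨rfl, rfl⟩⟩ | ⟨j, ⟨rfl, rfl⟩ | ⟨rfl, rfl⟩⟩)
      · exact Or.inl ⟨i, Or.inl ⟨rfl, rfl⟩⟩
      · exact Or.inl ⟨i, Or.inr ⟨rfl, rfl⟩⟩
      · exact Or.inr ⟨j, Or.inl ⟨rfl, rfl⟩⟩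
      · exact Or.inr ⟨j, Or.inr ⟨rfl, rfl⟩⟩
    · rintro (⟨i, ⟨rfl, rfl⟩ | ⟨rfl, rfl⟩⟩ | ⟨j, ⟨rfl, rfl⟩ | ⟨rfl, rfl⟩⟩)
      · exact Or.inl ⟨i, Or.inl ⟨rfl, rfl⟩⟩
      · exact Or.inl ⟨i, Or.inr ⟨rfl, rfl⟩⟩
      · exact Or.inr ⟨j, Or.inl ⟨rfl, rfl⟩⟩
      · exact Or.inr ⟨j, Or.inr ⟨rfl, rfl⟩⟩

/-- `M11` has `n + m` edges. -/
lemma m11_ncard (hg : ∀ j, g j ∈ c j) : (M11 c g).edgeSet.ncard = n + m := by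
  have hinj1 : Function.Injective
      (fun i : Fin n => s(Sum.inl (i, 2), (Sum.inl (i, 0) : XSatV n m))) := by
    intro a b hab
    rw [Sym2.eq_iff] at hab
    rcases hab with ⟨h1, -⟩ | ⟨h1, -⟩ <;> simp_all
  have hinj2 : Function.Injective
      (fun j : Fin m => s(Sum.inr (j, none), (Sum.inr (j, some (g j)) : XSatV n m))) := by
    intro a b hab
    rw [Sym2.eq_iff] at hab
    rcases hab with ⟨h1, -⟩ | ⟨h1, -⟩ <;> simp_all
  have hdisj : Disjoint
      ((fun i : Fin n => s(Sum.inl (i, 2), (Sum.inl (i, 0) : XSatV n m))) '' Set.univ)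
      ((fun j : Fin m => s(Sum.inr (j, none), (Sum.inr (j, some (g j)) : XSatV n m))) ''
        Set.univ) := by
    rw [Set.disjoint_left]
    rintro e ⟨i, -, rfl⟩ ⟨j, -, h⟩
    rw [Sym2.eq_iff] at h
    rcases h with ⟨h1, -⟩ | ⟨h1, -⟩ <;> simp_all
  rw [m11_edgeSet hg, Set.ncard_union_eq hdisj (Set.toFinite _) (Set.toFinite _),
    Set.ncard_image_of_injective _ hinj1, Set.ncard_image_of_injective _ hinj2,
    Set.ncard_univ, Set.ncard_univ, Nat.card_eq_fintype_card, Nat.card_eq_fintype_card,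
    Fintype.card_fin, Fintype.card_fin]

end Helpers

/-- The matching arising from `{u_i t_i : i ∈ [n]}` by adding, for each `j ∈ [m]`, an edge
between `v_j` and one of its neighbours, is a uniquely restricted matching in `G(Γ)` of size
`n + m`; indeed, every edge of this matching is a pendant edge in `G(M)`, i.e. has an endpoint
of degree `1` in `G(M)`. -/
theorem m11_isURMatching {n m : ℕ} (c : Fin m → Finset (Fin n))
    (hcard : ∀ j, (c j).card = 3)
    (hocc : ∀ i : Fin n, (Finset.univ.filter fun j => i ∈ c j).card ≤ 3)
    (g : Fin m → Fin n) (hg : ∀ j, g j ∈ c j) :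
    IsURMatching (xsatGraph c) (M11 c g) ∧ (M11 c g).edgeSet.ncard = n + m ∧
      ∀ a b (hab : (M11 c g).Adj a b),
        (∃! w, ((xsatGraph c).induce (M11 c g).verts).Adj ⟨a, (M11 c g).edge_vert hab⟩ w) ∨
        (∃! w, ((xsatGraph c).induce (M11 c g).verts).Adj ⟨b, (M11 c g).edge_vert hab.symm⟩ w) := by
  refine ⟨⟨m11_isMatching hg, m11_unique hg⟩, m11_ncard hg, ?_⟩
  intro a b hab
  rcases (m11_adj hg).1 hab with ⟨i, ⟨rfl, rfl⟩ | ⟨rfl, rfl⟩⟩ | ⟨j, ⟨rfl, rfl⟩ | ⟨rfl, rfl⟩⟩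
  · exact Or.inl (pendant_u hg i _)
  · exact Or.inr (pendant_u hg i _)
  · exact Or.inl (pendant_v hg j _)
  · exact Or.inr (pendant_v hg j _)
end

section
/- Let M = M_1 ∪ M_2 ∪ M_3 be a maximum uniquely restricted matching in G(Γ) with M_1 contained in the edge sets of the X_i's, M_2 contained in the edge sets of the C_j's, and M_3 contained in the set of edges between ∪_i X_i and its complement, chosen minimizing |M_3|. If i ∈ [n] is such that M_3 contains an edge incident with X_i, then M_1 contains no edge of the star on X_i. -/
open SimpleGraph

/-- The number of edges of a subgraph `M` joining the left part and the right part of the vertex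
set; this counts the edges of `M₃` in the decomposition `M = M₁ ∪ M₂ ∪ M₃`. -/
noncomputable def crossCount {α β : Type*} {G : SimpleGraph (α ⊕ β)} (M : G.Subgraph) : ℕ :=
  {p : α × β | M.Adj (Sum.inl p.1) (Sum.inr p.2)}.ncard

section Generic
variable {V : Type*} {G : SimpleGraph V} {M : G.Subgraph}

lemma matching_partner_unique (hM : M.IsMatching) {x y z : V}
    (h1 : M.Adj x y) (h2 : M.Adj x z) : y = z := by
  obtain ⟨w, -, hu⟩ := hM h1.fst_mem
  rw [hu y h1, hu z h2]

lemma matching_deleteVerts (hM : M.IsMatching) {s : Set V}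
    (hs : ∀ v ∈ s, ∀ w, M.Adj v w → w ∈ s) :
    (M.deleteVerts s).IsMatching := by
  rintro v ⟨hv, hvs⟩
  obtain ⟨w, hw, hu⟩ := hM hv
  refine ⟨w, ?_, ?_⟩
  · exact Subgraph.deleteVerts_adj.mpr ⟨hv, hvs, hw.snd_mem, fun hws => hvs (hs w hws v hw.symm), hw⟩
  · intro y hy
    exact hu y (Subgraph.deleteVerts_adj.mp hy).2.2.2.2

/-- Flip an alternating path `a-b-c-d-e` with `ab, cd ∈ M`, `bc, de ∈ G`, `e` uncovered. -/
lemma flip_path4 (hM : M.IsMatching) {a b c d e : V}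
    (h0 : M.Adj a b) (h1 : M.Adj c d) (h2 : G.Adj b c) (h3 : G.Adj d e)
    (he : e ∉ M.verts) (hac : a ≠ c) :
    ∃ N : G.Subgraph, N.IsMatching ∧ N.verts = (M.verts \ {a}) ∪ {e} ∧
      (∀ x y, N.Adj x y ↔ (M.Adj x y ∧ x ∉ ({a,b,c,d} : Set V) ∧ y ∉ ({a,b,c,d} : Set V))
        ∨ s(b,c) = s(x,y) ∨ s(d,e) = s(x,y)) := by
  have hab : a ≠ b := h0.ne
  have hcd : c ≠ d := h1.ne
  have hbc : b ≠ c := h2.ne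
  have hde : d ≠ e := h3.ne
  have hbd : b ≠ d := fun h => hac (matching_partner_unique hM (h ▸ h0.symm) h1.symm)
  have had : a ≠ d := fun h => hbc (matching_partner_unique hM (h ▸ h0) h1.symm)
  have hea : e ≠ a := fun h => he (h ▸ h0.fst_mem)
  have heb : e ≠ b := fun h => he (h ▸ h0.snd_mem)
  have hec : e ≠ c := fun h => he (h ▸ h1.fst_mem)
  have hclosed : ∀ v ∈ ({a,b,c,d} : Set V), ∀ w, M.Adj v w → w ∈ ({a,b,c,d} : Set V) := by
    rintro v (rfl|rfl|rfl|rfl) w hw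
    · have := matching_partner_unique hM h0 hw; simp [← this]
    · have := matching_partner_unique hM h0.symm hw; simp [← this]
    · have := matching_partner_unique hM h1 hw; simp [← this]
    · have := matching_partner_unique hM h1.symm hw; simp [← this]
  set N : G.Subgraph := (M.deleteVerts {a,b,c,d}) ⊔ G.subgraphOfAdj h2 ⊔ G.subgraphOfAdj h3 with hN
  have hm1 : (M.deleteVerts {a,b,c,d}).IsMatching := matching_deleteVerts hM hclosed
  have hm2 := SimpleGraph.Subgraph.IsMatching.subgraphOfAdj h2
  have hm3 := SimpleGraph.Subgraph.IsMatching.subgraphOfAdj h3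
  have hsup1 : (M.deleteVerts {a,b,c,d} ⊔ G.subgraphOfAdj h2).IsMatching := by
    refine hm1.sup hm2 ?_
    rw [hm1.support_eq_verts, hm2.support_eq_verts, Subgraph.deleteVerts_verts,
      subgraphOfAdj_verts]
    rw [Set.disjoint_iff]
    rintro x ⟨⟨-, hno⟩, hx2⟩
    exact hno (by rcases hx2 with rfl|rfl <;> simp)
  have hmat : N.IsMatching := by
    refine hsup1.sup hm3 ?_
    rw [hsup1.support_eq_verts, hm3.support_eq_verts]
    have : (M.deleteVerts {a,b,c,d} ⊔ G.subgraphOfAdj h2).verts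
        = (M.verts \ {a,b,c,d}) ∪ {b,c} := rfl
    rw [this, subgraphOfAdj_verts]
    rw [Set.disjoint_iff]
    rintro x ⟨hA, hB⟩
    rcases hB with rfl|rfl
    · rcases hA with ⟨-, hno⟩|hx
      · exact hno (by simp)
      · rcases hx with rfl|rfl
        · exact hbd rfl
        · exact hcd rfl
    · rcases hA with ⟨hx, -⟩|hx
      · exact he hx
      · rcases hx with rfl|rfl
        · exact heb rfl
        · exact hec rfl
  refine ⟨N, hmat, ?_, ?_⟩
  · rw [hN]
    have hv : N.verts = (M.verts \ {a,b,c,d}) ∪ ({b,c} ∪ {d,e}) := by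
      simp [hN, Subgraph.verts_sup, Set.union_assoc]
    rw [hv]
    ext x
    simp only [Set.mem_union, Set.mem_diff, Set.mem_insert_iff, Set.mem_singleton_iff]
    constructor
    · rintro (⟨hx, hno⟩|((rfl|rfl)|(rfl|rfl)))
      · exact Or.inl ⟨hx, fun h => hno (by simp [h])⟩
      · exact Or.inl ⟨h0.snd_mem, hab.symm⟩
      · exact Or.inl ⟨h1.fst_mem, hac.symm⟩
      · exact Or.inl ⟨h1.snd_mem, had.symm⟩
      · exact Or.inr rfl
    · rintro (⟨hx, hxa⟩|rfl)
      · by_cases hb : x = b; · exact Or.inr (Or.inl (Or.inl hb))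
        by_cases hc : x = c; · exact Or.inr (Or.inl (Or.inr hc))
        by_cases hd : x = d; · exact Or.inr (Or.inr (Or.inl hd))
        exact Or.inl ⟨hx, by simp [hxa, hb, hc, hd]⟩
      · exact Or.inr (Or.inr (Or.inr rfl))
  · intro x y
    simp only [hN, Subgraph.sup_adj, subgraphOfAdj_adj, Subgraph.deleteVerts_adj]
    constructor
    · rintro ((⟨-, hx, -, hy, hxy⟩|h)|h)
      · exact Or.inl ⟨hxy, hx, hy⟩
      · exact Or.inr (Or.inl h)
      · exact Or.inr (Or.inr h)
    · rintro (⟨hxy, hx, hy⟩|h|h)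
      · exact Or.inl (Or.inl ⟨hxy.fst_mem, hx, hxy.snd_mem, hy, hxy⟩)
      · exact Or.inl (Or.inr h)
      · exact Or.inr h

/-- Flip an alternating path `a-b-e` with `ab ∈ M`, `be ∈ G`, `e` uncovered. -/
lemma flip_path2 (hM : M.IsMatching) {a b e : V}
    (h0 : M.Adj a b) (h2 : G.Adj b e) (he : e ∉ M.verts) :
    ∃ N : G.Subgraph, N.IsMatching ∧ N.verts = (M.verts \ {a}) ∪ {e} ∧
      (∀ x y, N.Adj x y ↔ (M.Adj x y ∧ x ∉ ({a,b} : Set V) ∧ y ∉ ({a,b} : Set V))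
        ∨ s(b,e) = s(x,y)) := by
  have hab : a ≠ b := h0.ne
  have hbe : b ≠ e := h2.ne
  have hea : e ≠ a := fun h => he (h ▸ h0.fst_mem)
  have hclosed : ∀ v ∈ ({a,b} : Set V), ∀ w, M.Adj v w → w ∈ ({a,b} : Set V) := by
    rintro v (rfl|rfl) w hw
    · have := matching_partner_unique hM h0 hw; simp [← this]
    · have := matching_partner_unique hM h0.symm hw; simp [← this]
  have hm1 : (M.deleteVerts {a,b}).IsMatching := matching_deleteVerts hM hclosed
  have hm2 := SimpleGraph.Subgraph.IsMatching.subgraphOfAdj h2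
  have hmat : (M.deleteVerts {a,b} ⊔ G.subgraphOfAdj h2).IsMatching := by
    refine hm1.sup hm2 ?_
    rw [hm1.support_eq_verts, hm2.support_eq_verts, Subgraph.deleteVerts_verts,
      subgraphOfAdj_verts, Set.disjoint_iff]
    rintro x ⟨⟨hxm, hno⟩, hx2⟩
    rcases hx2 with rfl|rfl
    · exact hno (by simp)
    · exact he hxm
  refine ⟨_, hmat, ?_, ?_⟩
  · ext x
    simp only [Subgraph.verts_sup, Subgraph.deleteVerts_verts, subgraphOfAdj_verts,
      Set.mem_union, Set.mem_diff, Set.mem_insert_iff, Set.mem_singleton_iff]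
    constructor
    · rintro (⟨hx, hno⟩|(rfl|rfl))
      · exact Or.inl ⟨hx, fun h => hno (by simp [h])⟩
      · exact Or.inl ⟨h0.snd_mem, hab.symm⟩
      · exact Or.inr rfl
    · rintro (⟨hx, hxa⟩|rfl)
      · by_cases hb : x = b; · exact Or.inr (Or.inl hb)
        exact Or.inl ⟨hx, by simp [hxa, hb]⟩
      · exact Or.inr (Or.inr rfl)
  · intro x y
    simp only [Subgraph.sup_adj, subgraphOfAdj_adj, Subgraph.deleteVerts_adj]
    constructor
    · rintro (⟨-, hx, -, hy, hxy⟩|h)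
      · exact Or.inl ⟨hxy, hx, hy⟩
      · exact Or.inr h
    · rintro (⟨hxy, hx, hy⟩|h)
      · exact Or.inl ⟨hxy.fst_mem, hx, hxy.snd_mem, hy, hxy⟩
      · exact Or.inr h

/-- Flip an alternating 4-cycle `a-b-c-d-a` with `ab, cd ∈ M`, `bc, da ∈ G`. -/
lemma flip_cycle4 (hM : M.IsMatching) {a b c d : V}
    (h0 : M.Adj a b) (h1 : M.Adj c d) (h2 : G.Adj b c) (h3 : G.Adj d a)
    (hac : a ≠ c) :
    ∃ N : G.Subgraph, N.IsMatching ∧ N.verts = M.verts ∧ N.Adj b c := by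
  have hab : a ≠ b := h0.ne
  have hcd : c ≠ d := h1.ne
  have hbc : b ≠ c := h2.ne
  have hda : d ≠ a := h3.ne
  have hbd : b ≠ d := fun h => hac (matching_partner_unique hM (h ▸ h0.symm) h1.symm)
  have hclosed : ∀ v ∈ ({a,b,c,d} : Set V), ∀ w, M.Adj v w → w ∈ ({a,b,c,d} : Set V) := by
    rintro v (rfl|rfl|rfl|rfl) w hw
    · have := matching_partner_unique hM h0 hw; simp [← this]
    · have := matching_partner_unique hM h0.symm hw; simp [← this]
    · have := matching_partner_unique hM h1 hw; simp [← this]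
    · have := matching_partner_unique hM h1.symm hw; simp [← this]
  have hm1 : (M.deleteVerts {a,b,c,d}).IsMatching := matching_deleteVerts hM hclosed
  have hm2 := SimpleGraph.Subgraph.IsMatching.subgraphOfAdj h2
  have hm3 := SimpleGraph.Subgraph.IsMatching.subgraphOfAdj h3
  have hsup1 : (M.deleteVerts {a,b,c,d} ⊔ G.subgraphOfAdj h2).IsMatching := by
    refine hm1.sup hm2 ?_
    rw [hm1.support_eq_verts, hm2.support_eq_verts, Subgraph.deleteVerts_verts,
      subgraphOfAdj_verts, Set.disjoint_iff]
    rintro x ⟨⟨-, hno⟩, hx2⟩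
    exact hno (by rcases hx2 with rfl|rfl <;> simp)
  have hmat : (M.deleteVerts {a,b,c,d} ⊔ G.subgraphOfAdj h2 ⊔ G.subgraphOfAdj h3).IsMatching := by
    refine hsup1.sup hm3 ?_
    rw [hsup1.support_eq_verts, hm3.support_eq_verts]
    have : (M.deleteVerts {a,b,c,d} ⊔ G.subgraphOfAdj h2).verts
        = (M.verts \ {a,b,c,d}) ∪ {b,c} := rfl
    rw [this, subgraphOfAdj_verts, Set.disjoint_iff]
    rintro x ⟨hA, hB⟩
    rcases hB with rfl|rfl
    · rcases hA with ⟨-, hno⟩|hx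
      · exact hno (by simp)
      · rcases hx with rfl|rfl
        · exact hbd rfl
        · exact hcd rfl
    · rcases hA with ⟨-, hno⟩|hx
      · exact hno (by simp)
      · rcases hx with rfl|rfl
        · exact hab rfl
        · exact hac rfl
  refine ⟨_, hmat, ?_, ?_⟩
  · ext x
    simp only [Subgraph.verts_sup, Subgraph.deleteVerts_verts, subgraphOfAdj_verts,
      Set.mem_union, Set.mem_diff, Set.mem_insert_iff, Set.mem_singleton_iff]
    constructor
    · rintro ((⟨hx, -⟩|(rfl|rfl))|(rfl|rfl))
      · exact hx
      · exact h0.snd_mem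
      · exact h1.fst_mem
      · exact h1.snd_mem
      · exact h0.fst_mem
    · intro hx
      by_cases h : x = a ∨ x = b ∨ x = c ∨ x = d
      · rcases h with rfl|rfl|rfl|rfl
        · exact Or.inr (Or.inr rfl)
        · exact Or.inl (Or.inr (Or.inl rfl))
        · exact Or.inl (Or.inr (Or.inr rfl))
        · exact Or.inr (Or.inl rfl)
      · push_neg at h
        exact Or.inl (Or.inl ⟨hx, by simp [h.1, h.2.1, h.2.2.1, h.2.2.2]⟩)
  · exact Or.inl (Or.inr rfl)

/-- Flip an alternating 6-cycle `a-b-c-d-e-f-a` with `ab, cd, ef ∈ M`, `bc, de, fa ∈ G`. -/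
lemma flip_cycle6 (hM : M.IsMatching) {a b c d e f : V}
    (h0 : M.Adj a b) (h1 : M.Adj c d) (h1' : M.Adj e f)
    (h2 : G.Adj b c) (h3 : G.Adj d e) (h4 : G.Adj f a)
    (hac : a ≠ c) (hae : a ≠ e) (hce : c ≠ e) :
    ∃ N : G.Subgraph, N.IsMatching ∧ N.verts = M.verts ∧ N.Adj b c := by
  have hab : a ≠ b := h0.ne
  have hcd : c ≠ d := h1.ne
  have hef : e ≠ f := h1'.ne
  have hbc : b ≠ c := h2.ne
  have hde : d ≠ e := h3.ne
  have hfa : f ≠ a := h4.ne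
  have hbd : b ≠ d := fun h => hac (matching_partner_unique hM (h ▸ h0.symm) h1.symm)
  have hbf : b ≠ f := fun h => hae (matching_partner_unique hM (h ▸ h0.symm) h1'.symm)
  have hdf : d ≠ f := fun h => hce (matching_partner_unique hM (h ▸ h1.symm) h1'.symm)
  have had : a ≠ d := fun h => hbc (matching_partner_unique hM (h ▸ h0) h1.symm)
  have haf : a ≠ f := fun h => hfa h.symm
  have hbe : b ≠ e := fun h => haf (matching_partner_unique hM (h ▸ h0.symm) h1')
  have hcf : c ≠ f := fun h => hde (matching_partner_unique hM (h ▸ h1) h1'.symm)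
  have hclosed : ∀ v ∈ ({a,b,c,d,e,f} : Set V), ∀ w, M.Adj v w → w ∈ ({a,b,c,d,e,f} : Set V) := by
    rintro v (rfl|rfl|rfl|rfl|rfl|rfl) w hw
    · have := matching_partner_unique hM h0 hw; simp [← this]
    · have := matching_partner_unique hM h0.symm hw; simp [← this]
    · have := matching_partner_unique hM h1 hw; simp [← this]
    · have := matching_partner_unique hM h1.symm hw; simp [← this]
    · have := matching_partner_unique hM h1' hw; simp [← this]
    · have := matching_partner_unique hM h1'.symm hw; simp [← this]
  have hm1 : (M.deleteVerts {a,b,c,d,e,f}).IsMatching := matching_deleteVerts hM hclosed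
  have hm2 := SimpleGraph.Subgraph.IsMatching.subgraphOfAdj h2
  have hm3 := SimpleGraph.Subgraph.IsMatching.subgraphOfAdj h3
  have hm4 := SimpleGraph.Subgraph.IsMatching.subgraphOfAdj h4
  have hsup1 : (M.deleteVerts {a,b,c,d,e,f} ⊔ G.subgraphOfAdj h2).IsMatching := by
    refine hm1.sup hm2 ?_
    rw [hm1.support_eq_verts, hm2.support_eq_verts, Subgraph.deleteVerts_verts,
      subgraphOfAdj_verts, Set.disjoint_iff]
    rintro x ⟨⟨-, hno⟩, hx2⟩
    exact hno (by rcases hx2 with rfl|rfl <;> simp)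
  have hsup2 : (M.deleteVerts {a,b,c,d,e,f} ⊔ G.subgraphOfAdj h2 ⊔ G.subgraphOfAdj h3).IsMatching := by
    refine hsup1.sup hm3 ?_
    rw [hsup1.support_eq_verts, hm3.support_eq_verts]
    have : (M.deleteVerts {a,b,c,d,e,f} ⊔ G.subgraphOfAdj h2).verts
        = (M.verts \ {a,b,c,d,e,f}) ∪ {b,c} := rfl
    rw [this, subgraphOfAdj_verts, Set.disjoint_iff]
    rintro x ⟨hA, hB⟩
    rcases hB with rfl|rfl
    · rcases hA with ⟨-, hno⟩|hx
      · exact hno (by simp)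
      · rcases hx with rfl|rfl
        · exact hbd rfl
        · exact hcd rfl
    · rcases hA with ⟨-, hno⟩|hx
      · exact hno (by simp)
      · rcases hx with rfl|rfl
        · exact hbe rfl
        · exact hce rfl
  have hmat : (M.deleteVerts {a,b,c,d,e,f} ⊔ G.subgraphOfAdj h2 ⊔ G.subgraphOfAdj h3
      ⊔ G.subgraphOfAdj h4).IsMatching := by
    refine hsup2.sup hm4 ?_
    rw [hsup2.support_eq_verts, hm4.support_eq_verts]
    have : (M.deleteVerts {a,b,c,d,e,f} ⊔ G.subgraphOfAdj h2 ⊔ G.subgraphOfAdj h3).verts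
        = ((M.verts \ {a,b,c,d,e,f}) ∪ {b,c}) ∪ {d,e} := rfl
    rw [this, subgraphOfAdj_verts, Set.disjoint_iff]
    rintro x ⟨hA, hB⟩
    rcases hB with rfl|rfl
    · rcases hA with (⟨-, hno⟩|hx)|hx
      · exact hno (by simp)
      · rcases hx with rfl|rfl
        · exact hbf rfl
        · exact hcf rfl
      · rcases hx with rfl|rfl
        · exact hdf rfl
        · exact hef rfl
    · rcases hA with (⟨-, hno⟩|hx)|hx
      · exact hno (by simp)
      · rcases hx with rfl|rfl
        · exact hab rfl
        · exact hac rfl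
      · rcases hx with rfl|rfl
        · exact had rfl
        · exact hae rfl
  refine ⟨_, hmat, ?_, ?_⟩
  · ext x
    simp only [Subgraph.verts_sup, Subgraph.deleteVerts_verts, subgraphOfAdj_verts,
      Set.mem_union, Set.mem_diff, Set.mem_insert_iff, Set.mem_singleton_iff]
    constructor
    · rintro (((⟨hx, -⟩|(rfl|rfl))|(rfl|rfl))|(rfl|rfl))
      · exact hx
      · exact h0.snd_mem
      · exact h1.fst_mem
      · exact h1.snd_mem
      · exact h1'.fst_mem
      · exact h1'.snd_mem
      · exact h0.fst_mem
    · intro hx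
      by_cases h : x = a ∨ x = b ∨ x = c ∨ x = d ∨ x = e ∨ x = f
      · rcases h with rfl|rfl|rfl|rfl|rfl|rfl
        · exact Or.inr (Or.inr rfl)
        · exact Or.inl (Or.inl (Or.inr (Or.inl rfl)))
        · exact Or.inl (Or.inl (Or.inr (Or.inr rfl)))
        · exact Or.inl (Or.inr (Or.inl rfl))
        · exact Or.inl (Or.inr (Or.inr rfl))
        · exact Or.inr (Or.inl rfl)
      · push_neg at h
        exact Or.inl (Or.inl (Or.inl ⟨hx, by
          simp [h.1, h.2.1, h.2.2.1, h.2.2.2.1, h.2.2.2.2.1, h.2.2.2.2.2]⟩))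
  · exact Or.inl (Or.inl (Or.inr rfl))

end Generic


section XSat
variable {n m : ℕ} {c : Fin m → Finset (Fin n)} {i : Fin n} {j : Fin m} {a : Fin n}

lemma fin3_ne2 : ∀ k : Fin 3, k ≠ 2 → k = 0 ∨ k = 1 := by decide

lemma xadj_ut : (xsatGraph c).Adj (Sum.inl (i,2)) (Sum.inl (i,0)) :=
  ⟨by simp, Or.inl ⟨rfl, rfl, by decide⟩⟩

lemma xadj_uf : (xsatGraph c).Adj (Sum.inl (i,2)) (Sum.inl (i,1)) :=
  ⟨by simp, Or.inl ⟨rfl, rfl, by decide⟩⟩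

lemma xadj_fw (h : i ∈ c j) : (xsatGraph c).Adj (Sum.inl (i,1)) (Sum.inr (j, some i)) :=
  ⟨by simp, Or.inl (Or.inl ⟨rfl, rfl, h⟩)⟩

lemma xadj_tw (ha : a ∈ c j) (hi : i ∈ c j) (hne : a ≠ i) :
    (xsatGraph c).Adj (Sum.inl (i,0)) (Sum.inr (j, some a)) :=
  ⟨by simp, Or.inl (Or.inr ⟨rfl, a, rfl, ha, hi, hne⟩)⟩

lemma xadj_vw (ha : a ∈ c j) : (xsatGraph c).Adj (Sum.inr (j, none)) (Sum.inr (j, some a)) :=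
  ⟨by simp, Or.inl ⟨rfl, rfl, a, rfl, ha⟩⟩

lemma xadj_u_inv {z : XSatV n m} (h : (xsatGraph c).Adj (Sum.inl (i,2)) z) :
    z = Sum.inl (i,0) ∨ z = Sum.inl (i,1) := by
  obtain ⟨hne, h|h⟩ := h
  · rcases z with ⟨i',k'⟩|⟨j',o⟩
    · obtain ⟨h1, -, h3⟩ := h
      rcases fin3_ne2 k' h3 with rfl|rfl
      · exact Or.inl (by rw [h1])
      · exact Or.inr (by rw [h1])
    · rcases h with ⟨h1,-⟩|⟨h1,-⟩ <;> exact absurd h1 (by decide)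
  · rcases z with ⟨i',k'⟩|⟨j',o⟩
    · obtain ⟨-, -, h3⟩ := h
      exact absurd rfl h3
    · exact h.elim

lemma xadj_v_inv {z : XSatV n m} (h : (xsatGraph c).Adj (Sum.inr (j, none)) z) :
    ∃ a, z = Sum.inr (j, some a) ∧ a ∈ c j := by
  obtain ⟨hne, h|h⟩ := h
  · rcases z with ⟨i',k'⟩|⟨j',o⟩
    · exact h.elim
    · obtain ⟨rfl, -, a, rfl, ha⟩ := h
      exact ⟨a, rfl, ha⟩
  · rcases z with ⟨i',k'⟩|⟨j',o⟩
    · rcases h with ⟨-,h1,-⟩|⟨-,h1⟩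
      · exact absurd h1 (by simp)
      · obtain ⟨a, h2, -⟩ := h1
        exact absurd h2 (by simp)
    · obtain ⟨rfl, rfl, a, h2, -⟩ := h
      exact absurd h2 (by simp)

lemma xadj_f_inv {w : Fin m × Option (Fin n)}
    (h : (xsatGraph c).Adj (Sum.inl (i,1)) (Sum.inr w)) :
    w.2 = some i ∧ i ∈ c w.1 := by
  obtain ⟨j', o⟩ := w
  obtain ⟨hne, h|h⟩ := h
  · rcases h with ⟨-,h1,h2⟩|⟨h1,-⟩
    · exact ⟨h1, h2⟩
    · exact absurd h1 (by decide)
  · exact h.elim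

lemma xadj_t_inv {w : Fin m × Option (Fin n)}
    (h : (xsatGraph c).Adj (Sum.inl (i,0)) (Sum.inr w)) :
    ∃ a, w.2 = some a ∧ a ∈ c w.1 ∧ i ∈ c w.1 ∧ a ≠ i := by
  obtain ⟨j', o⟩ := w
  obtain ⟨hne, h|h⟩ := h
  · rcases h with ⟨h1,-⟩|⟨-,a,h1,h2,h3,h4⟩
    · exact absurd h1 (by decide)
    · exact ⟨a, h1, h2, h3, h4⟩
  · exact h.elim

lemma xadj_u_not_cross {w : Fin m × Option (Fin n)} :
    ¬ (xsatGraph c).Adj (Sum.inl (i,2)) (Sum.inr w) := by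
  intro h
  rcases xadj_u_inv h with h|h <;> exact absurd h (by simp)

lemma xadj_ll_inv {i' : Fin n} {k k' : Fin 3}
    (h : (xsatGraph c).Adj (Sum.inl (i,k)) (Sum.inl (i',k'))) :
    i = i' ∧ ((k = 2 ∧ k' ≠ 2) ∨ (k' = 2 ∧ k ≠ 2)) := by
  obtain ⟨hne, h|h⟩ := h
  · exact ⟨h.1, Or.inl h.2⟩
  · exact ⟨h.1.symm, Or.inr h.2⟩

end XSat



section Main
variable {n m : ℕ} {c : Fin m → Finset (Fin n)}

lemma ncard_swap2 {α : Type*} {S : Set α} {e1 e2 e3 e4 : α}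
    (h1 : e1 ∈ S) (h2 : e2 ∈ S) (h12 : e1 ≠ e2) (h3 : e3 ∉ S) (h4 : e4 ∉ S) (h34 : e3 ≠ e4)
    (hfin : S.Finite) : ((S \ {e1,e2}) ∪ {e3,e4}).ncard = S.ncard := by
  have hsub : ({e1,e2} : Set α) ⊆ S := by rintro x (rfl|rfl) <;> assumption
  have hd : Disjoint (S \ ({e1,e2} : Set α)) {e3,e4} := by
    rw [Set.disjoint_iff]
    rintro x ⟨⟨hxS,-⟩, (rfl|rfl)⟩
    · exact h3 hxS
    · exact h4 hxS
  rw [Set.ncard_union_eq hd hfin.diff (Set.toFinite _), Set.ncard_diff hsub,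
    Set.ncard_pair h12, Set.ncard_pair h34]
  have := Set.ncard_le_ncard hsub hfin
  rw [Set.ncard_pair h12] at this
  omega

lemma caseA (M : (xsatGraph c).Subgraph) (hM : M.IsMatching)
    (hUniq : ∀ N : (xsatGraph c).Subgraph, N.IsMatching → N.verts = M.verts → N = M)
    (hmax : M.edgeSet.ncard = nuUR (xsatGraph c))
    (hmin : ∀ M' : (xsatGraph c).Subgraph, IsURMatching (xsatGraph c) M' →
      M'.edgeSet.ncard = nuUR (xsatGraph c) → crossCount M ≤ crossCount M')
    {i : Fin n} {j : Fin m} (hij : i ∈ c j)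
    (hcross : M.Adj (Sum.inl (i,1)) (Sum.inr (j, some i)))
    (hint : M.Adj (Sum.inl (i,2)) (Sum.inl (i,0))) : False := by
  classical
  by_cases hv : (Sum.inr (j, none) : XSatV n m) ∈ M.verts
  · -- v_j is covered by M : alternating 6-cycle, contradicting unique restriction
    obtain ⟨y, hy, -⟩ := hM hv
    obtain ⟨a, rfl, ha⟩ := xadj_v_inv (M.adj_sub hy)
    have hane : a ≠ i := by
      rintro rfl
      have := matching_partner_unique hM hy.symm hcross.symm
      simp at this
    obtain ⟨N, hNm, hNv, hNadj⟩ := flip_cycle6 hM hcross hy hint.symm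
      (xadj_vw hij).symm (xadj_tw ha hij hane).symm xadj_uf
      (by simp) (by simp) (by simp)
    rw [hUniq N hNm hNv] at hNadj
    have := matching_partner_unique hM hNadj hcross.symm
    simp at this
  · -- v_j uncovered : flip the path t_i - u_i - f_i - w - v_j
    obtain ⟨M', hM'm, hM'v, hM'adj⟩ := flip_path4 hM hint.symm hcross xadj_uf
      (xadj_vw hij).symm hv (by simp)
    have hpt : ∀ z, M.Adj (Sum.inl (i,0)) z → z = Sum.inl (i,2) :=
      fun z hz => matching_partner_unique hM hz hint.symm
    have hpu : ∀ z, M.Adj (Sum.inl (i,2)) z → z = Sum.inl (i,0) :=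
      fun z hz => matching_partner_unique hM hz hint
    have hpf : ∀ z, M.Adj (Sum.inl (i,1)) z → z = Sum.inr (j, some i) :=
      fun z hz => matching_partner_unique hM hz hcross
    have hpw : ∀ z, M.Adj (Sum.inr (j, some i)) z → z = Sum.inl (i,1) :=
      fun z hz => matching_partner_unique hM hz hcross.symm
    have htM' : (Sum.inl (i,0) : XSatV n m) ∉ M'.verts := by
      rw [hM'v]
      rintro (⟨-, h⟩|h)
      · exact h rfl
      · exact absurd h (by simp)
    -- M' is uniquely restricted
    have hM'ur : IsURMatching (xsatGraph c) M' := by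
      refine ⟨hM'm, fun N hN hNv => ?_⟩
      have htN : (Sum.inl (i,0) : XSatV n m) ∉ N.verts := by rw [hNv]; exact htM'
      have huN : (Sum.inl (i,2) : XSatV n m) ∈ N.verts := by
        rw [hNv, hM'v]; exact Or.inl ⟨hint.fst_mem, by simp⟩
      obtain ⟨z, hz, -⟩ := hN huN
      have hzf : z = Sum.inl (i,1) := by
        rcases xadj_u_inv (N.adj_sub hz) with rfl|rfl
        · exact absurd hz.snd_mem htN
        · rfl
      subst hzf
      have hvN : (Sum.inr (j, none) : XSatV n m) ∈ N.verts := by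
        rw [hNv, hM'v]; exact Or.inr rfl
      obtain ⟨y, hy, -⟩ := hN hvN
      obtain ⟨a, rfl, ha⟩ := xadj_v_inv (N.adj_sub hy)
      by_cases hai : a = i
      · rw [hai] at hy
        obtain ⟨N', hN'm, hN'v, hN'adj⟩ := flip_path4 hN hy hz.symm (xadj_fw hij).symm
          xadj_ut htN (by simp)
        have hN'veq : N'.verts = M.verts := by
          rw [hN'v, hNv, hM'v]
          ext x
          constructor
          · rintro (⟨(⟨hx,-⟩|hx), hne⟩|rfl)
            · exact hx
            · exact absurd hx hne
            · exact hint.snd_mem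
          · intro hx
            by_cases hxt : x = Sum.inl (i,0)
            · exact Or.inr hxt
            · exact Or.inl ⟨Or.inl ⟨hx, hxt⟩, fun h => hv (h ▸ hx)⟩
        have hNM := hUniq N' hN'm hN'veq
        have hqv : ∀ z, N.Adj (Sum.inr (j, none)) z → z = Sum.inr (j, some i) :=
          fun z h => matching_partner_unique hN h hy
        have hqw : ∀ z, N.Adj (Sum.inr (j, some i)) z → z = Sum.inr (j, none) :=
          fun z h => matching_partner_unique hN h hy.symm
        have hqu : ∀ z, N.Adj (Sum.inl (i,2)) z → z = Sum.inl (i,1) :=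
          fun z h => matching_partner_unique hN h hz
        have hqf : ∀ z, N.Adj (Sum.inl (i,1)) z → z = Sum.inl (i,2) :=
          fun z h => matching_partner_unique hN h hz.symm
        refine SimpleGraph.Subgraph.ext hNv ?_
        funext x y
        refine propext ⟨fun hxy => ?_, fun hxy => ?_⟩
        · rw [hM'adj]
          by_cases hx1 : x = Sum.inr (j, none)
          · subst hx1; rw [hqv y hxy]; exact Or.inr (Or.inr Sym2.eq_swap)
          by_cases hx2 : x = Sum.inr (j, some i)
          · subst hx2; rw [hqw y hxy]; exact Or.inr (Or.inr rfl)
          by_cases hx3 : x = Sum.inl (i,2)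
          · subst hx3; rw [hqu y hxy]; exact Or.inr (Or.inl rfl)
          by_cases hx4 : x = Sum.inl (i,1)
          · subst hx4; rw [hqf y hxy]; exact Or.inr (Or.inl Sym2.eq_swap)
          by_cases hy1 : y = Sum.inr (j, none)
          · subst hy1; exact absurd (hqv x hxy.symm) hx2
          by_cases hy2 : y = Sum.inr (j, some i)
          · subst hy2; exact absurd (hqw x hxy.symm) hx1
          by_cases hy3 : y = Sum.inl (i,2)
          · subst hy3; exact absurd (hqu x hxy.symm) hx4
          by_cases hy4 : y = Sum.inl (i,1)
          · subst hy4; exact absurd (hqf x hxy.symm) hx3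
          have hN' : N'.Adj x y := by
            rw [hN'adj]
            exact Or.inl ⟨hxy, by rintro (h|h|h|h) <;> tauto, by rintro (h|h|h|h) <;> tauto⟩
          rw [hNM] at hN'
          refine Or.inl ⟨hN', ?_, ?_⟩
          · rintro (h|h|h|h)
            · exact absurd hxy.fst_mem (h ▸ htN)
            · exact hx3 h
            · exact hx4 h
            · exact hx2 h
          · rintro (h|h|h|h)
            · exact absurd hxy.snd_mem (h ▸ htN)
            · exact hy3 h
            · exact hy4 h
            · exact hy2 h
        · rw [hM'adj] at hxy
          rcases hxy with ⟨hMxy, hxS, hyS⟩|h|h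
          · have hN' : N'.Adj x y := by rw [hNM]; exact hMxy
            rw [hN'adj] at hN'
            rcases hN' with ⟨h,-,-⟩|h|h
            · exact h
            · rcases Sym2.eq_iff.mp h with ⟨h1,-⟩|⟨-,h1⟩
              · exact absurd h1.symm (by rintro rfl; exact hxS (by simp))
              · exact absurd h1.symm (by rintro rfl; exact hxS (by simp))
            · rcases Sym2.eq_iff.mp h with ⟨h1,-⟩|⟨-,h1⟩
              · exact absurd h1.symm (by rintro rfl; exact hxS (by simp))
              · exact absurd h1.symm (by rintro rfl; exact hxS (by simp))
          · rcases Sym2.eq_iff.mp h with ⟨rfl,rfl⟩|⟨rfl,rfl⟩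
            · exact hz
            · exact hz.symm
          · rcases Sym2.eq_iff.mp h with ⟨rfl,rfl⟩|⟨rfl,rfl⟩
            · exact hy.symm
            · exact hy
      · obtain ⟨N', hN'm, hN'v, hN'adj⟩ := flip_path2 hN hy (xadj_tw ha hij hai).symm htN
        have hN'veq : N'.verts = M.verts := by
          rw [hN'v, hNv, hM'v]
          ext x
          constructor
          · rintro (⟨(⟨hx,-⟩|hx), hne⟩|rfl)
            · exact hx
            · exact absurd hx hne
            · exact hint.snd_mem
          · intro hx
            by_cases hxt : x = Sum.inl (i,0)
            · exact Or.inr hxt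
            · exact Or.inl ⟨Or.inl ⟨hx, hxt⟩, fun h => hv (h ▸ hx)⟩
        have hNM := hUniq N' hN'm hN'veq
        have huf : N'.Adj (Sum.inl (i,2)) (Sum.inl (i,1)) := by
          rw [hN'adj]
          exact Or.inl ⟨hz, by rintro (h|h) <;> exact absurd h (by simp), by rintro (h|h) <;> exact absurd h (by simp)⟩
        rw [hNM] at huf
        exact absurd (hpu _ huf) (by simp)
    -- M' has the same number of edges as M
    have hsize : M'.edgeSet.ncard = M.edgeSet.ncard := by
      have hedge : M'.edgeSet = (M.edgeSet \
          {s(Sum.inl (i,0), Sum.inl (i,2)), s(Sum.inl (i,1), Sum.inr (j, some i))}) ∪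
          {s(Sum.inl (i,2), Sum.inl (i,1)), s(Sum.inr (j, some i), Sum.inr (j, none))} := by
        ext e
        induction e using Sym2.ind with
        | _ x y =>
          simp only [SimpleGraph.Subgraph.mem_edgeSet, Set.mem_union, Set.mem_diff,
            Set.mem_insert_iff, Set.mem_singleton_iff]
          rw [hM'adj]
          constructor
          · rintro (⟨hMxy, hxS, hyS⟩|h|h)
            · left
              refine ⟨hMxy, ?_⟩
              rintro (h|h)
              · rcases Sym2.eq_iff.mp h with ⟨rfl,-⟩|⟨rfl,-⟩
                · exact hxS (by simp)
                · exact hxS (by simp)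
              · rcases Sym2.eq_iff.mp h with ⟨rfl,-⟩|⟨rfl,-⟩
                · exact hxS (by simp)
                · exact hxS (by simp)
            · exact Or.inr (Or.inl h.symm)
            · exact Or.inr (Or.inr h.symm)
          · rintro (⟨hMxy, hne⟩|(h|h))
            · push_neg at hne
              obtain ⟨hne1, hne2⟩ := hne
              left
              refine ⟨hMxy, ?_, ?_⟩
              · rintro (h|h|h|h)
                · subst h; exact hne1 (by rw [hpt _ hMxy])
                · subst h; exact hne1 (by rw [hpu _ hMxy]; exact Sym2.eq_swap)
                · subst h; exact hne2 (by rw [hpf _ hMxy])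
                · subst h; exact hne2 (by rw [hpw _ hMxy]; exact Sym2.eq_swap)
              · rintro (h|h|h|h)
                · subst h; exact hne1 (by rw [hpt _ hMxy.symm]; exact Sym2.eq_swap)
                · subst h; exact hne1 (by rw [hpu _ hMxy.symm])
                · subst h; exact hne2 (by rw [hpf _ hMxy.symm]; exact Sym2.eq_swap)
                · subst h; exact hne2 (by rw [hpw _ hMxy.symm])
            · exact Or.inr (Or.inl h.symm)
            · exact Or.inr (Or.inr h.symm)
      rw [hedge]
      refine ncard_swap2 hint.symm hcross ?_ ?_ ?_ ?_ (Set.toFinite _)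
      · intro h
        rcases Sym2.eq_iff.mp h with ⟨h1,-⟩|⟨h1,-⟩
        · exact absurd h1 (by simp)
        · exact absurd h1 (by simp)
      · intro h
        exact absurd (hpu _ h) (by simp)
      · intro h
        exact hv (SimpleGraph.Subgraph.Adj.snd_mem h)
      · intro h
        rcases Sym2.eq_iff.mp h with ⟨h1,-⟩|⟨h1,-⟩ <;> exact absurd h1 (by simp)
    -- M' has one fewer crossing edge than M
    have hless : crossCount M' + 1 = crossCount M := by
      have hcset : {p : (Fin n × Fin 3) × (Fin m × Option (Fin n)) |
            M'.Adj (Sum.inl p.1) (Sum.inr p.2)}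
          = {p : (Fin n × Fin 3) × (Fin m × Option (Fin n)) |
            M.Adj (Sum.inl p.1) (Sum.inr p.2)} \ {((i,1), (j, some i))} := by
        ext ⟨p1, p2⟩
        simp only [Set.mem_setOf_eq, Set.mem_diff, Set.mem_singleton_iff]
        rw [hM'adj]
        constructor
        · rintro (⟨hMxy, hxS, hyS⟩|h|h)
          · refine ⟨hMxy, fun heq => ?_⟩
            have : p1 = (i,1) := congrArg Prod.fst heq
            exact hxS (by rw [this]; simp)
          · rcases Sym2.eq_iff.mp h with ⟨-,h1⟩|⟨h1,-⟩ <;> exact absurd h1 (by simp)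
          · rcases Sym2.eq_iff.mp h with ⟨h1,-⟩|⟨-,h1⟩ <;> exact absurd h1 (by simp)
        · rintro ⟨hMxy, hne⟩
          left
          refine ⟨hMxy, ?_, ?_⟩
          · rintro (h|h|h|h)
            · exact absurd (hpt _ (by rw [← h]; exact hMxy)) (by simp)
            · exact absurd (hpu _ (by rw [← h]; exact hMxy)) (by simp)
            · refine hne ?_
              have h2 := hpf _ (by rw [← h]; exact hMxy)
              have hp1 : p1 = (i,1) := Sum.inl.inj h
              have hp2 : p2 = (j, some i) := Sum.inr.inj h2
              rw [hp1, hp2]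
            · exact absurd h (by simp)
          · rintro (h|h|h|h)
            · exact absurd h (by simp)
            · exact absurd h (by simp)
            · exact absurd h (by simp)
            · refine hne ?_
              have h2 := hpw _ (by rw [← h]; exact hMxy.symm)
              have hp1 : p1 = (i,1) := Sum.inl.inj h2
              have hp2 : p2 = (j, some i) := Sum.inr.inj h
              rw [hp1, hp2]
      have hmem : (((i,(1:Fin 3)), ((j, some i) : Fin m × Option (Fin n))) :
          (Fin n × Fin 3) × (Fin m × Option (Fin n))) ∈
          {p : (Fin n × Fin 3) × (Fin m × Option (Fin n)) |
            M.Adj (Sum.inl p.1) (Sum.inr p.2)} := hcross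
      have hpos : 0 < {p : (Fin n × Fin 3) × (Fin m × Option (Fin n)) |
            M.Adj (Sum.inl p.1) (Sum.inr p.2)}.ncard :=
        (Set.ncard_pos (Set.toFinite _)).mpr ⟨_, hmem⟩
      have hdiff := Set.ncard_diff_singleton_of_mem hmem
      show {p : (Fin n × Fin 3) × (Fin m × Option (Fin n)) |
          M'.Adj (Sum.inl p.1) (Sum.inr p.2)}.ncard + 1
        = {p : (Fin n × Fin 3) × (Fin m × Option (Fin n)) |
          M.Adj (Sum.inl p.1) (Sum.inr p.2)}.ncard
      rw [hcset, hdiff]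
      omega
    have := hmin M' hM'ur (hsize.trans hmax)
    omega

lemma caseB (M : (xsatGraph c).Subgraph) (hM : M.IsMatching)
    (hUniq : ∀ N : (xsatGraph c).Subgraph, N.IsMatching → N.verts = M.verts → N = M)
    (hmax : M.edgeSet.ncard = nuUR (xsatGraph c))
    (hmin : ∀ M' : (xsatGraph c).Subgraph, IsURMatching (xsatGraph c) M' →
      M'.edgeSet.ncard = nuUR (xsatGraph c) → crossCount M ≤ crossCount M')
    {i : Fin n} {j : Fin m} {a0 : Fin n} (hij : i ∈ c j) (ha0 : a0 ∈ c j) (hne0 : a0 ≠ i)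
    (hcross : M.Adj (Sum.inl (i,0)) (Sum.inr (j, some a0)))
    (hint : M.Adj (Sum.inl (i,2)) (Sum.inl (i,1))) : False := by
  classical
  by_cases hv : (Sum.inr (j, none) : XSatV n m) ∈ M.verts
  · obtain ⟨y, hy, -⟩ := hM hv
    obtain ⟨a, rfl, ha⟩ := xadj_v_inv (M.adj_sub hy)
    by_cases hai : a = i
    · rw [hai] at hy
      obtain ⟨N, hNm, hNv, hNadj⟩ := flip_cycle6 hM hcross hy hint.symm
        (xadj_vw ha0).symm (xadj_fw hij).symm xadj_ut
        (by simp) (by simp) (by simp)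
      rw [hUniq N hNm hNv] at hNadj
      have := matching_partner_unique hM hNadj hcross.symm
      simp at this
    · obtain ⟨N, hNm, hNv, hNadj⟩ := flip_cycle4 hM hcross hy
        (xadj_vw ha0).symm (xadj_tw ha hij hai).symm (by simp)
      rw [hUniq N hNm hNv] at hNadj
      have := matching_partner_unique hM hNadj hcross.symm
      simp at this
  · obtain ⟨M', hM'm, hM'v, hM'adj⟩ := flip_path4 hM hint.symm hcross xadj_ut
      (xadj_vw ha0).symm hv (by simp)
    have hpf : ∀ z, M.Adj (Sum.inl (i,1)) z → z = Sum.inl (i,2) :=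
      fun z hz => matching_partner_unique hM hz hint.symm
    have hpu : ∀ z, M.Adj (Sum.inl (i,2)) z → z = Sum.inl (i,1) :=
      fun z hz => matching_partner_unique hM hz hint
    have hpt : ∀ z, M.Adj (Sum.inl (i,0)) z → z = Sum.inr (j, some a0) :=
      fun z hz => matching_partner_unique hM hz hcross
    have hpw : ∀ z, M.Adj (Sum.inr (j, some a0)) z → z = Sum.inl (i,0) :=
      fun z hz => matching_partner_unique hM hz hcross.symm
    have hfM' : (Sum.inl (i,1) : XSatV n m) ∉ M'.verts := by
      rw [hM'v]
      rintro (⟨-, h⟩|h)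
      · exact h rfl
      · exact absurd h (by simp)
    have hM'ur : IsURMatching (xsatGraph c) M' := by
      refine ⟨hM'm, fun N hN hNv => ?_⟩
      have hfN : (Sum.inl (i,1) : XSatV n m) ∉ N.verts := by rw [hNv]; exact hfM'
      have huN : (Sum.inl (i,2) : XSatV n m) ∈ N.verts := by
        rw [hNv, hM'v]; exact Or.inl ⟨hint.fst_mem, by simp⟩
      obtain ⟨z, hz, -⟩ := hN huN
      have hzf : z = Sum.inl (i,0) := by
        rcases xadj_u_inv (N.adj_sub hz) with rfl|rfl
        · rfl
        · exact absurd hz.snd_mem hfN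
      subst hzf
      have hvN : (Sum.inr (j, none) : XSatV n m) ∈ N.verts := by
        rw [hNv, hM'v]; exact Or.inr rfl
      obtain ⟨y, hy, -⟩ := hN hvN
      obtain ⟨a, rfl, ha⟩ := xadj_v_inv (N.adj_sub hy)
      by_cases hai : a = i
      · rw [hai] at hy
        obtain ⟨N', hN'm, hN'v, hN'adj⟩ := flip_path2 hN hy (xadj_fw hij).symm hfN
        have hN'veq : N'.verts = M.verts := by
          rw [hN'v, hNv, hM'v]
          ext x
          constructor
          · rintro (⟨(⟨hx,-⟩|hx), hne⟩|rfl)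
            · exact hx
            · exact absurd hx hne
            · exact hint.snd_mem
          · intro hx
            by_cases hxt : x = Sum.inl (i,1)
            · exact Or.inr hxt
            · exact Or.inl ⟨Or.inl ⟨hx, hxt⟩, fun h => hv (h ▸ hx)⟩
        have hNM := hUniq N' hN'm hN'veq
        have hut : N'.Adj (Sum.inl (i,2)) (Sum.inl (i,0)) := by
          rw [hN'adj]
          exact Or.inl ⟨hz, by rintro (h|h) <;> exact absurd h (by simp),
            by rintro (h|h) <;> exact absurd h (by simp)⟩
        rw [hNM] at hut
        exact absurd (hpu _ hut) (by simp)
      · by_cases ha0y : a = a0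
        · rw [ha0y] at hy
          obtain ⟨N', hN'm, hN'v, hN'adj⟩ := flip_path4 hN hy hz.symm
            (xadj_tw ha0 hij hne0).symm xadj_uf hfN (by simp)
          have hN'veq : N'.verts = M.verts := by
            rw [hN'v, hNv, hM'v]
            ext x
            constructor
            · rintro (⟨(⟨hx,-⟩|hx), hne⟩|rfl)
              · exact hx
              · exact absurd hx hne
              · exact hint.snd_mem
            · intro hx
              by_cases hxt : x = Sum.inl (i,1)
              · exact Or.inr hxt
              · exact Or.inl ⟨Or.inl ⟨hx, hxt⟩, fun h => hv (h ▸ hx)⟩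
          have hNM := hUniq N' hN'm hN'veq
          have hqv : ∀ z, N.Adj (Sum.inr (j, none)) z → z = Sum.inr (j, some a0) :=
            fun z h => matching_partner_unique hN h hy
          have hqw : ∀ z, N.Adj (Sum.inr (j, some a0)) z → z = Sum.inr (j, none) :=
            fun z h => matching_partner_unique hN h hy.symm
          have hqu : ∀ z, N.Adj (Sum.inl (i,2)) z → z = Sum.inl (i,0) :=
            fun z h => matching_partner_unique hN h hz
          have hqt : ∀ z, N.Adj (Sum.inl (i,0)) z → z = Sum.inl (i,2) :=
            fun z h => matching_partner_unique hN h hz.symm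
          refine SimpleGraph.Subgraph.ext hNv ?_
          funext x y
          refine propext ⟨fun hxy => ?_, fun hxy => ?_⟩
          · rw [hM'adj]
            by_cases hx1 : x = Sum.inr (j, none)
            · subst hx1; rw [hqv y hxy]; exact Or.inr (Or.inr Sym2.eq_swap)
            by_cases hx2 : x = Sum.inr (j, some a0)
            · subst hx2; rw [hqw y hxy]; exact Or.inr (Or.inr rfl)
            by_cases hx3 : x = Sum.inl (i,2)
            · subst hx3; rw [hqu y hxy]; exact Or.inr (Or.inl rfl)
            by_cases hx4 : x = Sum.inl (i,0)
            · subst hx4; rw [hqt y hxy]; exact Or.inr (Or.inl Sym2.eq_swap)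
            by_cases hy1 : y = Sum.inr (j, none)
            · subst hy1; exact absurd (hqv x hxy.symm) hx2
            by_cases hy2 : y = Sum.inr (j, some a0)
            · subst hy2; exact absurd (hqw x hxy.symm) hx1
            by_cases hy3 : y = Sum.inl (i,2)
            · subst hy3; exact absurd (hqu x hxy.symm) hx4
            by_cases hy4 : y = Sum.inl (i,0)
            · subst hy4; exact absurd (hqt x hxy.symm) hx3
            have hN' : N'.Adj x y := by
              rw [hN'adj]
              exact Or.inl ⟨hxy, by rintro (h|h|h|h) <;> tauto, by rintro (h|h|h|h) <;> tauto⟩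
            rw [hNM] at hN'
            refine Or.inl ⟨hN', ?_, ?_⟩
            · rintro (h|h|h|h)
              · exact absurd hxy.fst_mem (h ▸ hfN)
              · exact hx3 h
              · exact hx4 h
              · exact hx2 h
            · rintro (h|h|h|h)
              · exact absurd hxy.snd_mem (h ▸ hfN)
              · exact hy3 h
              · exact hy4 h
              · exact hy2 h
          · rw [hM'adj] at hxy
            rcases hxy with ⟨hMxy, hxS, hyS⟩|h|h
            · have hN' : N'.Adj x y := by rw [hNM]; exact hMxy
              rw [hN'adj] at hN'
              rcases hN' with ⟨h,-,-⟩|h|h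
              · exact h
              · rcases Sym2.eq_iff.mp h with ⟨h1,-⟩|⟨-,h1⟩
                · exact absurd h1.symm (by rintro rfl; exact hxS (by simp))
                · exact absurd h1.symm (by rintro rfl; exact hxS (by simp))
              · rcases Sym2.eq_iff.mp h with ⟨h1,-⟩|⟨-,h1⟩
                · exact absurd h1.symm (by rintro rfl; exact hxS (by simp))
                · exact absurd h1.symm (by rintro rfl; exact hxS (by simp))
            · rcases Sym2.eq_iff.mp h with ⟨rfl,rfl⟩|⟨rfl,rfl⟩
              · exact hz
              · exact hz.symm
            · rcases Sym2.eq_iff.mp h with ⟨rfl,rfl⟩|⟨rfl,rfl⟩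
              · exact hy.symm
              · exact hy
        · obtain ⟨N', hN'm, hN'v, hN'adj⟩ := flip_path4 hN hy hz.symm
            (xadj_tw ha hij hai).symm xadj_uf hfN (by simp)
          have hN'veq : N'.verts = M.verts := by
            rw [hN'v, hNv, hM'v]
            ext x
            constructor
            · rintro (⟨(⟨hx,-⟩|hx), hne⟩|rfl)
              · exact hx
              · exact absurd hx hne
              · exact hint.snd_mem
            · intro hx
              by_cases hxt : x = Sum.inl (i,1)
              · exact Or.inr hxt
              · exact Or.inl ⟨Or.inl ⟨hx, hxt⟩, fun h => hv (h ▸ hx)⟩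
          have hNM := hUniq N' hN'm hN'veq
          have hty : N'.Adj (Sum.inr (j, some a)) (Sum.inl (i,0)) := by
            rw [hN'adj]
            exact Or.inr (Or.inl rfl)
          rw [hNM] at hty
          have h2 := matching_partner_unique hM hty.symm hcross
          exact absurd (by simpa using h2 : a = a0) ha0y
    have hsize : M'.edgeSet.ncard = M.edgeSet.ncard := by
      have hedge : M'.edgeSet = (M.edgeSet \
          {s(Sum.inl (i,1), Sum.inl (i,2)), s(Sum.inl (i,0), Sum.inr (j, some a0))}) ∪
          {s(Sum.inl (i,2), Sum.inl (i,0)), s(Sum.inr (j, some a0), Sum.inr (j, none))} := by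
        ext e
        induction e using Sym2.ind with
        | _ x y =>
          simp only [SimpleGraph.Subgraph.mem_edgeSet, Set.mem_union, Set.mem_diff,
            Set.mem_insert_iff, Set.mem_singleton_iff]
          rw [hM'adj]
          constructor
          · rintro (⟨hMxy, hxS, hyS⟩|h|h)
            · left
              refine ⟨hMxy, ?_⟩
              rintro (h|h)
              · rcases Sym2.eq_iff.mp h with ⟨rfl,-⟩|⟨rfl,-⟩
                · exact hxS (by simp)
                · exact hxS (by simp)
              · rcases Sym2.eq_iff.mp h with ⟨rfl,-⟩|⟨rfl,-⟩
                · exact hxS (by simp)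
                · exact hxS (by simp)
            · exact Or.inr (Or.inl h.symm)
            · exact Or.inr (Or.inr h.symm)
          · rintro (⟨hMxy, hne⟩|(h|h))
            · push_neg at hne
              obtain ⟨hne1, hne2⟩ := hne
              left
              refine ⟨hMxy, ?_, ?_⟩
              · rintro (h|h|h|h)
                · subst h; exact hne1 (by rw [hpf _ hMxy])
                · subst h; exact hne1 (by rw [hpu _ hMxy]; exact Sym2.eq_swap)
                · subst h; exact hne2 (by rw [hpt _ hMxy])
                · subst h; exact hne2 (by rw [hpw _ hMxy]; exact Sym2.eq_swap)
              · rintro (h|h|h|h)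
                · subst h; exact hne1 (by rw [hpf _ hMxy.symm]; exact Sym2.eq_swap)
                · subst h; exact hne1 (by rw [hpu _ hMxy.symm])
                · subst h; exact hne2 (by rw [hpt _ hMxy.symm]; exact Sym2.eq_swap)
                · subst h; exact hne2 (by rw [hpw _ hMxy.symm])
            · exact Or.inr (Or.inl h.symm)
            · exact Or.inr (Or.inr h.symm)
      rw [hedge]
      refine ncard_swap2 hint.symm hcross ?_ ?_ ?_ ?_ (Set.toFinite _)
      · intro h
        rcases Sym2.eq_iff.mp h with ⟨h1,-⟩|⟨h1,-⟩
        · exact absurd h1 (by simp)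
        · exact absurd h1 (by simp)
      · intro h
        exact absurd (hpu _ h) (by simp)
      · intro h
        exact hv (SimpleGraph.Subgraph.Adj.snd_mem h)
      · intro h
        rcases Sym2.eq_iff.mp h with ⟨h1,-⟩|⟨h1,-⟩ <;> exact absurd h1 (by simp)
    have hless : crossCount M' + 1 = crossCount M := by
      have hcset : {p : (Fin n × Fin 3) × (Fin m × Option (Fin n)) |
            M'.Adj (Sum.inl p.1) (Sum.inr p.2)}
          = {p : (Fin n × Fin 3) × (Fin m × Option (Fin n)) |
            M.Adj (Sum.inl p.1) (Sum.inr p.2)} \ {((i,0), (j, some a0))} := by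
        ext ⟨p1, p2⟩
        simp only [Set.mem_setOf_eq, Set.mem_diff, Set.mem_singleton_iff]
        rw [hM'adj]
        constructor
        · rintro (⟨hMxy, hxS, hyS⟩|h|h)
          · refine ⟨hMxy, fun heq => ?_⟩
            have : p1 = (i,0) := congrArg Prod.fst heq
            exact hxS (by rw [this]; simp)
          · rcases Sym2.eq_iff.mp h with ⟨-,h1⟩|⟨h1,-⟩ <;> exact absurd h1 (by simp)
          · rcases Sym2.eq_iff.mp h with ⟨h1,-⟩|⟨-,h1⟩ <;> exact absurd h1 (by simp)
        · rintro ⟨hMxy, hne⟩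
          left
          refine ⟨hMxy, ?_, ?_⟩
          · rintro (h|h|h|h)
            · exact absurd (hpf _ (by rw [← h]; exact hMxy)) (by simp)
            · exact absurd (hpu _ (by rw [← h]; exact hMxy)) (by simp)
            · refine hne ?_
              have h2 := hpt _ (by rw [← h]; exact hMxy)
              have hp1 : p1 = (i,0) := Sum.inl.inj h
              have hp2 : p2 = (j, some a0) := Sum.inr.inj h2
              rw [hp1, hp2]
            · exact absurd h (by simp)
          · rintro (h|h|h|h)
            · exact absurd h (by simp)
            · exact absurd h (by simp)
            · exact absurd h (by simp)
            · refine hne ?_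
              have h2 := hpw _ (by rw [← h]; exact hMxy.symm)
              have hp1 : p1 = (i,0) := Sum.inl.inj h2
              have hp2 : p2 = (j, some a0) := Sum.inr.inj h
              rw [hp1, hp2]
      have hmem : (((i,(0:Fin 3)), ((j, some a0) : Fin m × Option (Fin n))) :
          (Fin n × Fin 3) × (Fin m × Option (Fin n))) ∈
          {p : (Fin n × Fin 3) × (Fin m × Option (Fin n)) |
            M.Adj (Sum.inl p.1) (Sum.inr p.2)} := hcross
      have hpos : 0 < {p : (Fin n × Fin 3) × (Fin m × Option (Fin n)) |
            M.Adj (Sum.inl p.1) (Sum.inr p.2)}.ncard :=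
        (Set.ncard_pos (Set.toFinite _)).mpr ⟨_, hmem⟩
      have hdiff := Set.ncard_diff_singleton_of_mem hmem
      show {p : (Fin n × Fin 3) × (Fin m × Option (Fin n)) |
          M'.Adj (Sum.inl p.1) (Sum.inr p.2)}.ncard + 1
        = {p : (Fin n × Fin 3) × (Fin m × Option (Fin n)) |
          M.Adj (Sum.inl p.1) (Sum.inr p.2)}.ncard
      rw [hcset, hdiff]
      omega
    have := hmin M' hM'ur (hsize.trans hmax)
    omega


end Main

/-- Let `M = M₁ ∪ M₂ ∪ M₃` be a maximum uniquely restricted matching in `G(Γ)` with `M₁`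
contained in the edge sets of the `X_i`'s, `M₂` contained in the edge sets of the `C_j`'s, and
`M₃` contained in the set of edges between `∪ᵢ X_i` and its complement, chosen minimizing `|M₃|`.
If `i ∈ [n]` is such that `M₃` contains an edge incident with `X_i`, then `M₁` contains no edge
of the star on `X_i`. (Since every edge of `G(Γ)` lies within some `X_i`, within some `C_j`, or
crosses between the two sides, the decomposition is determined by `M` itself, and `|M₃|` is
`crossCount M`.) -/


theorem no_star_edge_in_Xi_of_cross_edge {n m : ℕ} (c : Fin m → Finset (Fin n))
    (hcard : ∀ j, (c j).card = 3)
    (hocc : ∀ i : Fin n, (Finset.univ.filter fun j => i ∈ c j).card ≤ 3)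
    (M : (xsatGraph c).Subgraph) (hur : IsURMatching (xsatGraph c) M)
    (hmax : M.edgeSet.ncard = nuUR (xsatGraph c))
    (hmin : ∀ M' : (xsatGraph c).Subgraph, IsURMatching (xsatGraph c) M' →
      M'.edgeSet.ncard = nuUR (xsatGraph c) → crossCount M ≤ crossCount M')
    (i : Fin n)
    (hi : ∃ (k : Fin 3) (w : Fin m × Option (Fin n)), M.Adj (Sum.inl (i, k)) (Sum.inr w)) :
    ∀ k k' : Fin 3, ¬ M.Adj (Sum.inl (i, k)) (Sum.inl (i, k'))  := by
  classical
  intro k k' hadj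
  obtain ⟨hMm, hUniq⟩ := hur
  obtain ⟨k0, w, hcross⟩ := hi
  -- the cross edge cannot be at u_i
  have hk0 : k0 ≠ 2 := by
    rintro rfl
    exact xadj_u_not_cross (M.adj_sub hcross)
  -- normalize the internal edge so that its first endpoint is u_i
  obtain ⟨-, hcases⟩ := xadj_ll_inv (M.adj_sub hadj)
  have hint : ∃ b : Fin 3, b ≠ 2 ∧ M.Adj (Sum.inl (i,2)) (Sum.inl (i,b)) := by
    rcases hcases with ⟨hk2, hk'2⟩|⟨hk'2, hk2⟩
    · exact ⟨k', hk'2, hk2 ▸ hadj⟩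
    · exact ⟨k, hk2, hk'2 ▸ hadj.symm⟩
  obtain ⟨b, hb2, hu⟩ := hint
  have hbk0 : b ≠ k0 := by
    rintro rfl
    exact absurd (matching_partner_unique hMm hu.symm hcross) (by simp)
  rcases fin3_ne2 k0 hk0 with rfl|rfl
  · -- cross edge at t_i, internal edge is u_i f_i
    have hb1 : b = 1 := by
      rcases fin3_ne2 b hb2 with rfl|rfl
      · exact absurd rfl hbk0
      · rfl
    subst hb1
    obtain ⟨a0, ho, ha0, hij, hne0⟩ := xadj_t_inv (M.adj_sub hcross)
    obtain ⟨j, o⟩ := w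
    cases ho
    exact caseB M hMm hUniq hmax hmin hij ha0 hne0 hcross hu
  · -- cross edge at f_i, internal edge is u_i t_i
    have hb0 : b = 0 := by
      rcases fin3_ne2 b hb2 with rfl|rfl
      · rfl
      · exact absurd rfl hbk0
    subst hb0
    obtain ⟨ho, hij⟩ := xadj_f_inv (M.adj_sub hcross)
    obtain ⟨j, o⟩ := w
    cases ho
    exact caseA M hMm hUniq hmax hmin hij hcross hu
end

section
/- Let M = M_1 ∪ M_2 ∪ M_3 be a maximum uniquely restricted matching in G(Γ) with M_1 contained in the edge sets of the X_i's, M_2 contained in the edge sets of the C_j's, and M_3 contained in the set of edges between ∪_i X_i and its complement, chosen minimizing |M_3|. If j ∈ [m] is such that M_3 contains an edge incident with C_j, then M_2 contains no edge of the star on C_j. -/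
open SimpleGraph

section infra
variable {V : Type*} [DecidableEq V] {G : SimpleGraph V}

lemma matchUniq {M : G.Subgraph} (hM : M.IsMatching) {v a b : V}
    (h1 : M.Adj v a) (h2 : M.Adj v b) : a = b :=
  (hM (M.edge_vert h1)).unique h1 h2

def partnerSub (G : SimpleGraph V) (S : Set V) (p : V → V)
    (h3 : ∀ v ∈ S, G.Adj v (p v)) (h1 : ∀ v ∈ S, p v ∈ S) :
    G.Subgraph where
  verts := S
  Adj a b := (a ∈ S ∧ b = p a) ∨ (b ∈ S ∧ a = p b)
  adj_sub := by rintro a b (⟨h, rfl⟩ | ⟨h, rfl⟩); exacts [h3 a h, (h3 b h).symm]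
  edge_vert := by rintro a b (⟨h, rfl⟩ | ⟨h, rfl⟩); exacts [h, h1 b h]
  symm := ⟨fun a b h => h.symm⟩

lemma partnerSub_isMatching (S : Set V) (p : V → V) (h3) (h1)
    (h2 : ∀ v ∈ S, p (p v) = v) :
    (partnerSub G S p h3 h1).IsMatching := by
  intro v hv
  refine ⟨p v, Or.inl ⟨hv, rfl⟩, ?_⟩
  rintro w (⟨_, rfl⟩ | ⟨hw, rfl⟩)
  · rfl
  · conv_lhs => rw [← h2 w hw]

lemma matching_eq {P Q : G.Subgraph} (hP : P.IsMatching) (hQ : Q.IsMatching)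
    (hv : P.verts = Q.verts) (h : ∀ a b, P.Adj a b → Q.Adj a b) : P = Q := by
  refine Subgraph.ext hv ?_
  funext a b
  refine propext ⟨h a b, fun hq => ?_⟩
  have ha : a ∈ P.verts := hv ▸ Q.edge_vert hq
  obtain ⟨w, hw, -⟩ := hP ha
  have : b = w := matchUniq hQ hq (h a w hw)
  exact this ▸ hw

open Classical in
noncomputable def mpartner {M : G.Subgraph} (hM : M.IsMatching) : V → V :=
  fun v => if h : v ∈ M.verts then (hM h).choose else v

lemma mpartner_adj {M : G.Subgraph} (hM : M.IsMatching) {v : V} (hv : v ∈ M.verts) :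
    M.Adj v (mpartner hM v) := by
  rw [mpartner, dif_pos hv]; exact (hM hv).choose_spec.1

lemma mpartner_eq {M : G.Subgraph} (hM : M.IsMatching) {v w : V} (h : M.Adj v w) :
    mpartner hM v = w :=
  matchUniq hM (mpartner_adj hM (M.edge_vert h)) h

lemma mpartner_mem {M : G.Subgraph} (hM : M.IsMatching) {v : V} (hv : v ∈ M.verts) :
    mpartner hM v ∈ M.verts :=
  M.edge_vert (mpartner_adj hM hv).symm

lemma mpartner_nmem {M : G.Subgraph} (hM : M.IsMatching) {v : V} (hv : v ∉ M.verts) :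
    mpartner hM v = v := by
  rw [mpartner, dif_neg hv]

lemma mpartner_invol {M : G.Subgraph} (hM : M.IsMatching) (v : V) :
    mpartner hM (mpartner hM v) = v := by
  by_cases hv : v ∈ M.verts
  · exact mpartner_eq hM (mpartner_adj hM hv).symm
  · rw [mpartner_nmem hM hv, mpartner_nmem hM hv]

lemma mpartner_ne {M : G.Subgraph} (hM : M.IsMatching) {v w : V} (hv : v ∈ M.verts)
    (hw : w ∈ M.verts ∨ w = mpartner hM v) (h : mpartner hM v ≠ w) (h2 : v ≠ w) :
    mpartner hM w ≠ v := by
  intro hh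
  exact h (by rw [← hh, mpartner_invol])

/-- The rewired matching: conjugate the partner involution of `M` by a permutation `σ`.
If for every `w ∈ M.verts` the images `σ w` and `σ (partner w)` are adjacent in `G`, we
obtain a new matching on `σ '' M.verts`. -/
lemma rot_matching {M : G.Subgraph} (hM : M.IsMatching) (σ : Equiv.Perm V)
    (hadj : ∀ w ∈ M.verts, G.Adj (σ w) (σ (mpartner hM w))) :
    ∃ Q : G.Subgraph, Q.IsMatching ∧ Q.verts = σ '' M.verts ∧
      (∀ a b, M.Adj a b → Q.Adj (σ a) (σ b)) ∧
      (∀ a b, Q.Adj a b → M.Adj (σ.symm a) (σ.symm b)) := by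
  set p : V → V := fun v => σ (mpartner hM (σ.symm v)) with hp
  have hval : ∀ w, p (σ w) = σ (mpartner hM w) := by
    intro w; simp [hp]
  have h3 : ∀ v ∈ σ '' M.verts, G.Adj v (p v) := by
    rintro v ⟨w, hw, rfl⟩; rw [hval]; exact hadj w hw
  have h1 : ∀ v ∈ σ '' M.verts, p v ∈ σ '' M.verts := by
    rintro v ⟨w, hw, rfl⟩; rw [hval]; exact ⟨_, mpartner_mem hM hw, rfl⟩
  have h2 : ∀ v ∈ σ '' M.verts, p (p v) = v := by
    rintro v ⟨w, hw, rfl⟩; simp [hp, Equiv.symm_apply_apply, mpartner_invol]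
  refine ⟨partnerSub G _ p h3 h1, partnerSub_isMatching _ _ _ _ h2, rfl, ?_, ?_⟩
  · intro a b hab
    exact Or.inl ⟨⟨a, M.edge_vert hab, rfl⟩, ((hval a).trans
      (congrArg σ (mpartner_eq hM hab))).symm⟩
  · rintro a b (⟨⟨w, hw, rfl⟩, rfl⟩ | ⟨⟨w, hw, rfl⟩, rfl⟩) <;>
      rw [hval] <;> simp only [Equiv.symm_apply_apply]
    · exact mpartner_adj hM hw
    · exact (mpartner_adj hM hw).symm

lemma swap_image_of_mem_not_mem {S : Set V} {a b : V} (ha : a ∈ S) (hb : b ∉ S) :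
    (Equiv.swap a b) '' S = insert b (S \ {a}) := by
  ext x
  simp only [Set.mem_image, Set.mem_insert_iff, Set.mem_diff, Set.mem_singleton_iff]
  constructor
  · rintro ⟨w, hw, rfl⟩
    rcases eq_or_ne w a with h | hwa
    · left; rw [h, Equiv.swap_apply_left]
    rcases eq_or_ne w b with h | hwb
    · exact absurd (h ▸ hw) hb
    · right; rw [Equiv.swap_apply_of_ne_of_ne hwa hwb]; exact ⟨hw, hwa⟩
  · rintro (h | ⟨hx, hxa⟩)
    · exact ⟨a, ha, h ▸ Equiv.swap_apply_left a b⟩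
    · exact ⟨x, hx, Equiv.swap_apply_of_ne_of_ne hxa (fun hh => hb (hh ▸ hx))⟩

lemma swap_image_of_mem_mem {S : Set V} {a b : V} (ha : a ∈ S) (hb : b ∈ S) :
    (Equiv.swap a b) '' S = S := by
  ext x
  simp only [Set.mem_image]
  constructor
  · rintro ⟨w, hw, rfl⟩
    rcases eq_or_ne w a with h | hwa
    · rw [h, Equiv.swap_apply_left]; exact hb
    rcases eq_or_ne w b with h | hwb
    · rw [h, Equiv.swap_apply_right]; exact ha
    · rwa [Equiv.swap_apply_of_ne_of_ne hwa hwb]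
  · intro hx
    rcases eq_or_ne x a with h | hxa
    · exact ⟨b, hb, h ▸ Equiv.swap_apply_right a b⟩
    rcases eq_or_ne x b with h | hxb
    · exact ⟨a, ha, h ▸ Equiv.swap_apply_left a b⟩
    · exact ⟨x, hx, Equiv.swap_apply_of_ne_of_ne hxa hxb⟩

end infra

section infra2
variable {V : Type*} [DecidableEq V] {G : SimpleGraph V}

lemma mpartner_ne_of_adj {M : G.Subgraph} (hM : M.IsMatching) {x y w : V}
    (hxy : M.Adj x y) (hw : w ≠ y) : mpartner hM w ≠ x := fun hh =>
  hw (by rw [← mpartner_invol hM w, hh, mpartner_eq hM hxy])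

lemma mpartner_ne_of_nmem {M : G.Subgraph} (hM : M.IsMatching) {x w : V}
    (hx : x ∉ M.verts) (hw : w ∈ M.verts) : mpartner hM w ≠ x := fun hh =>
  hx (hh ▸ mpartner_mem hM hw)

lemma rot_matching' {M : G.Subgraph} (hM : M.IsMatching) (σ : Equiv.Perm V)
    (hadj : ∀ w ∈ M.verts, G.Adj (σ w) (σ (mpartner hM w))) :
    ∃ Q : G.Subgraph, Q.IsMatching ∧ Q.verts = σ '' M.verts ∧
      (∀ a b, M.Adj a b → Q.Adj (σ a) (σ b)) ∧
      (∀ a b, Q.Adj a b → M.Adj (σ.symm a) (σ.symm b)) ∧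
      Q.edgeSet.ncard = M.edgeSet.ncard := by
  obtain ⟨Q, hQm, hQv, hfwd, hbwd⟩ := rot_matching hM σ hadj
  refine ⟨Q, hQm, hQv, hfwd, hbwd, ?_⟩
  have hset : Q.edgeSet = Sym2.map σ '' M.edgeSet := by
    ext e
    induction e with
    | _ a b =>
      simp only [Subgraph.mem_edgeSet, Set.mem_image]
      constructor
      · intro h
        refine ⟨s(σ.symm a, σ.symm b), Subgraph.mem_edgeSet.2 (hbwd a b h), ?_⟩
        simp [Sym2.map_pair_eq]
      · rintro ⟨e', he', hmap⟩
        induction e' with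
        | _ x y =>
          have hq := hfwd x y (Subgraph.mem_edgeSet.1 he')
          have : s(σ x, σ y) = s(a, b) := by simpa [Sym2.map_pair_eq] using hmap
          rcases Sym2.eq_iff.1 this with ⟨rfl, rfl⟩ | ⟨rfl, rfl⟩
          · exact hq
          · exact hq.symm
  rw [hset, Set.ncard_image_of_injective _ (Sym2.map.injective σ.injective)]

lemma ur_rot_contra {M N : G.Subgraph}
    (hur : IsURMatching G M) (hN : N.IsMatching) (σ : Equiv.Perm V)
    (hadj : ∀ w ∈ N.verts, G.Adj (σ w) (σ (mpartner hN w)))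
    (himg : σ '' N.verts = M.verts)
    {a b : V} (hab : N.Adj a b) (hnadj : ¬ M.Adj (σ a) (σ b)) : False := by
  obtain ⟨Q, hQm, hQv, hfwd, -⟩ := rot_matching hN σ hadj
  have hQM : Q = M := hur.2 Q hQm (hQv.trans himg)
  exact hnadj (hQM ▸ hfwd a b hab)

end infra2

section adj
variable {n m : ℕ} {c : Fin m → Finset (Fin n)}
open Sum


lemma adj_uf (i : Fin n) (k : Fin 3) (hk : k ≠ 2) :
    (xsatGraph c).Adj (inl (i,2)) (inl (i,k)) := by
  rw [xsatGraph, fromRel_adj]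
  refine ⟨fun hh => hk ?_, Or.inl ⟨rfl, rfl, hk⟩⟩
  exact ((Prod.mk.injEq _ _ _ _).mp (Sum.inl.inj hh)).2.symm

lemma adj_vleaf {j : Fin m} {w : Fin n} (hw : w ∈ c j) :
    (xsatGraph c).Adj (inr (j,none)) (inr (j,some w)) := by
  rw [xsatGraph, fromRel_adj]
  exact ⟨by simp, Or.inl ⟨rfl, rfl, w, rfl, hw⟩⟩

lemma adj_fleaf {i : Fin n} {j : Fin m} (hi : i ∈ c j) :
    (xsatGraph c).Adj (inl (i,1)) (inr (j,some i)) := by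
  rw [xsatGraph, fromRel_adj]
  exact ⟨by simp, Or.inl (Or.inl ⟨rfl, rfl, hi⟩)⟩

lemma adj_tleaf {i w : Fin n} {j : Fin m} (hw : w ∈ c j) (hi : i ∈ c j) (hne : w ≠ i) :
    (xsatGraph c).Adj (inl (i,0)) (inr (j,some w)) := by
  rw [xsatGraph, fromRel_adj]
  exact ⟨by simp, Or.inl (Or.inr ⟨rfl, w, rfl, hw, hi, hne⟩)⟩

lemma adj_rr {j j' : Fin m} {o o' : Option (Fin n)}
    (h : (xsatGraph c).Adj (inr (j,o)) (inr (j',o'))) :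
    j = j' ∧ ((o = none ∧ ∃ i, o' = some i ∧ i ∈ c j) ∨
      (o' = none ∧ ∃ i, o = some i ∧ i ∈ c j)) := by
  rw [xsatGraph, fromRel_adj] at h
  obtain ⟨-, h | h⟩ := h
  · exact ⟨h.1, Or.inl ⟨h.2.1, h.2.2⟩⟩
  · exact ⟨h.1.symm, Or.inr ⟨h.2.1, h.1 ▸ h.2.2⟩⟩

lemma adj_rl {j : Fin m} {o : Option (Fin n)} {a : Fin n} {k : Fin 3}
    (h : (xsatGraph c).Adj (inr (j,o)) (inl (a,k))) :
    (k = 1 ∧ o = some a ∧ a ∈ c j) ∨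
      (k = 0 ∧ ∃ i', o = some i' ∧ i' ∈ c j ∧ a ∈ c j ∧ i' ≠ a) := by
  rw [xsatGraph, fromRel_adj] at h
  obtain ⟨-, h | h⟩ := h
  · exact h.elim
  · exact h

lemma adj_u {i : Fin n} {w : XSatV n m}
    (h : (xsatGraph c).Adj (inl (i,2)) w) :
    w = inl (i,0) ∨ w = inl (i,1) := by
  rw [xsatGraph, fromRel_adj] at h
  obtain ⟨hne, h⟩ := h
  obtain ⟨i', k'⟩ | ⟨j, o⟩ := w
  · rcases h with ⟨rfl, -, hk'⟩ | ⟨rfl, hk', h2⟩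
    · fin_cases k' <;> simp_all
    · exact absurd rfl h2
  · rcases h with (⟨h1, -⟩ | ⟨h1, -⟩) | h
    · exact absurd h1 (by decide)
    · exact absurd h1 (by decide)
    · exact h.elim

/-- neighbours of `v_j` -/
lemma adj_v {j : Fin m} {w : XSatV n m}
    (h : (xsatGraph c).Adj (inr (j,none)) w) :
    ∃ w', w = inr (j, some w') ∧ w' ∈ c j := by
  rw [xsatGraph, fromRel_adj] at h
  obtain ⟨hne, h⟩ := h
  obtain ⟨a, k⟩ | ⟨j', o'⟩ := w
  · rcases h with h | (⟨-, h1, -⟩ | ⟨-, i', h1, -⟩)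
    · exact h.elim
    · exact absurd h1 (by simp)
    · exact absurd h1 (by simp)
  · rcases h with ⟨rfl, -, i, rfl, hi⟩ | ⟨rfl, -, i, hcon, -⟩
    · exact ⟨i, rfl, hi⟩
    · exact absurd hcon (by simp)

/-- neighbours of a leaf `(j, some a)` -/
lemma adj_leaf {j : Fin m} {a : Fin n} {w : XSatV n m}
    (h : (xsatGraph c).Adj (inr (j, some a)) w) :
    w = inr (j, none) ∨ w = inl (a, 1) ∨
      ∃ i₀, w = inl (i₀, 0) ∧ i₀ ∈ c j ∧ a ∈ c j ∧ i₀ ≠ a := by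
  rw [xsatGraph, fromRel_adj] at h
  obtain ⟨hne, h⟩ := h
  obtain ⟨b, k⟩ | ⟨j', o'⟩ := w
  · rcases h with h | (⟨rfl, h1, hb⟩ | ⟨rfl, i', h1, hi', hb, hne'⟩)
    · exact h.elim
    · refine Or.inr (Or.inl ?_)
      rw [Option.some.inj h1]
    · cases Option.some.inj h1
      exact Or.inr (Or.inr ⟨b, rfl, hb, hi', Ne.symm hne'⟩)
  · rcases h with ⟨-, h1, -⟩ | ⟨rfl, rfl, -⟩
    · exact absurd h1 (by simp)
    · exact Or.inl rfl

end adj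

section hard
open Sum
variable {n m : ℕ} {c : Fin m → Finset (Fin n)}

lemma insert_diff_insert {V : Type*} {S : Set V} {u y : V} (hy : y ∈ S) (hu : u ∉ S) :
    insert y ((insert u (S \ {y})) \ {u}) = S := by
  ext x
  simp only [Set.mem_insert_iff, Set.mem_diff, Set.mem_singleton_iff]
  constructor
  · rintro (rfl | ⟨(rfl | ⟨hx, -⟩), hxu⟩)
    · exact hy
    · exact absurd rfl hxu
    · exact hx
  · intro hx
    by_cases hxy : x = y
    · exact Or.inl hxy
    · exact Or.inr ⟨Or.inr ⟨hx, hxy⟩, fun hh => hu (hh ▸ hx)⟩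

/-- The hard case for a cross edge at `f_i`: `f_i y ∈ M` with `y = (j, some i)`,
`v_j z ∈ M` with `z = (j, some i'')`, `i'' ≠ i`, and `u_i` unmatched. -/
lemma hardF {M : (xsatGraph c).Subgraph}
    (hur : IsURMatching (xsatGraph c) M)
    (hmax : M.edgeSet.ncard = nuUR (xsatGraph c))
    (hmin : ∀ M' : (xsatGraph c).Subgraph, IsURMatching (xsatGraph c) M' →
      M'.edgeSet.ncard = nuUR (xsatGraph c) → crossCount M ≤ crossCount M')
    {j : Fin m} {i i'' : Fin n}
    (ha : i ∈ c j) (hi'' : i'' ∈ c j) (hne : i'' ≠ i)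
    (hxy : M.Adj (inl (i,1)) (inr (j, some i)))
    (hvz : M.Adj (inr (j,none)) (inr (j, some i'')))
    (hu : (inl (i,2) : XSatV n m) ∉ M.verts) : False := by
  classical
  have hm := hur.1
  have hyv : (inr (j, some i) : XSatV n m) ∈ M.verts := M.edge_vert hxy.symm
  have hvv : (inr (j, none) : XSatV n m) ∈ M.verts := M.edge_vert hvz
  have hfv : (inl (i,1) : XSatV n m) ∈ M.verts := M.edge_vert hxy
  set σ1 : Equiv.Perm (XSatV n m) := Equiv.swap (inr (j, some i)) (inl (i,2)) with hσ1
  have s1fix : ∀ x : XSatV n m, x ≠ inr (j, some i) → x ≠ inl (i,2) → σ1 x = x :=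
    fun x h1 h2 => Equiv.swap_apply_of_ne_of_ne h1 h2
  have hadj1 : ∀ w ∈ M.verts, (xsatGraph c).Adj (σ1 w) (σ1 (mpartner hm w)) := by
    intro w hw
    by_cases h1 : w = inl (i,1)
    · subst h1
      rw [mpartner_eq hm hxy, hσ1, Equiv.swap_apply_left,
        Equiv.swap_apply_of_ne_of_ne (by simp) (by simp [Fin.ext_iff])]
      exact (adj_uf i 1 (by decide)).symm
    by_cases h2 : w = inr (j, some i)
    · subst h2
      rw [mpartner_eq hm hxy.symm, hσ1, Equiv.swap_apply_left,
        Equiv.swap_apply_of_ne_of_ne (by simp) (by simp [Fin.ext_iff])]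
      exact adj_uf i 1 (by decide)
    · have hwu : w ≠ inl (i,2) := fun hh => hu (hh ▸ hw)
      rw [s1fix w h2 hwu, s1fix _ (mpartner_ne_of_adj hm hxy.symm h1)
        (mpartner_ne_of_nmem hm hu hw)]
      exact M.adj_sub (mpartner_adj hm hw)
  obtain ⟨M', hM'm, hM'v, hfwd1, hbwd1, hcard1⟩ := rot_matching' hm σ1 hadj1
  have hM'verts : M'.verts = insert (inl (i,2)) (M.verts \ {inr (j, some i)}) := by
    rw [hM'v, hσ1]; exact swap_image_of_mem_not_mem hyv hu
  -- `M'` is uniquely restricted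
  have hM'ur : IsURMatching (xsatGraph c) M' := by
    refine ⟨hM'm, fun N hN hNv => ?_⟩
    have hNverts : N.verts = insert (inl (i,2)) (M.verts \ {inr (j, some i)}) :=
      hNv.trans hM'verts
    have hyN : (inr (j, some i) : XSatV n m) ∉ N.verts := by
      rw [hNverts]; simp
    have huN : (inl (i,2) : XSatV n m) ∈ N.verts := by rw [hNverts]; simp
    have hq := mpartner_adj hN huN
    rcases adj_u (N.adj_sub hq) with hq0 | hq1
    · -- `u` is matched to `t` in `N`: impossible
      exfalso
      rw [hq0] at hq
      have hvN : (inr (j, none) : XSatV n m) ∈ N.verts := by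
        rw [hNverts]; exact Or.inr ⟨hvv, by simp⟩
      have hl := mpartner_adj hN hvN
      obtain ⟨w₀, hleq, hw₀⟩ := adj_v (N.adj_sub hl)
      have hlN := mpartner_mem hN hvN
      rw [hleq] at hl hlN
      have hw₀i : w₀ ≠ i := by rintro rfl; exact hyN hlN
      set σ3 : Equiv.Perm (XSatV n m) :=
        (Equiv.swap (inl (i,2)) (inr (j, some w₀))).trans
          (Equiv.swap (inl (i,2)) (inr (j, some i))) with hσ3
      have s3u : σ3 (inl (i,2)) = inr (j, some w₀) := by
        rw [hσ3, Equiv.trans_apply, Equiv.swap_apply_left,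
          Equiv.swap_apply_of_ne_of_ne (by simp) (by simp [hw₀i])]
      have s3L : σ3 (inr (j, some w₀)) = inr (j, some i) := by
        rw [hσ3, Equiv.trans_apply, Equiv.swap_apply_right, Equiv.swap_apply_left]
      have s3fix : ∀ x : XSatV n m, x ≠ inl (i,2) → x ≠ inr (j, some w₀) →
          x ≠ inr (j, some i) → σ3 x = x := by
        intro x hx1 hx2 hx3
        rw [hσ3, Equiv.trans_apply, Equiv.swap_apply_of_ne_of_ne hx1 hx2,
          Equiv.swap_apply_of_ne_of_ne hx1 hx3]
      have hadj3 : ∀ w ∈ N.verts, (xsatGraph c).Adj (σ3 w) (σ3 (mpartner hN w)) := by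
        intro w hw
        by_cases h1 : w = inl (i,2)
        · subst h1
          rw [mpartner_eq hN hq, s3u, s3fix _ (by simp [Fin.ext_iff]) (by simp) (by simp)]
          exact (adj_tleaf hw₀ ha hw₀i).symm
        by_cases h2 : w = inl (i,0)
        · subst h2
          rw [mpartner_eq hN hq.symm, s3u,
            s3fix _ (by simp [Fin.ext_iff]) (by simp) (by simp)]
          exact adj_tleaf hw₀ ha hw₀i
        by_cases h3 : w = inr (j, none)
        · subst h3
          rw [mpartner_eq hN hl, s3L, s3fix _ (by simp) (by simp) (by simp)]
          exact adj_vleaf ha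
        by_cases h4 : w = inr (j, some w₀)
        · subst h4
          rw [mpartner_eq hN hl.symm, s3L, s3fix _ (by simp) (by simp) (by simp)]
          exact (adj_vleaf ha).symm
        · have hwy : w ≠ inr (j, some i) := fun hh => hyN (hh ▸ hw)
          rw [s3fix w h1 h4 hwy, s3fix _ (mpartner_ne_of_adj hN hq h2)
            (mpartner_ne_of_adj hN hl.symm h3) (mpartner_ne_of_nmem hN hyN hw)]
          exact N.adj_sub (mpartner_adj hN hw)
      have himg3 : σ3 '' N.verts = M.verts := by
        rw [hσ3, Equiv.coe_trans, Set.image_comp,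
          swap_image_of_mem_mem huN hlN,
          swap_image_of_mem_not_mem huN hyN, hNverts, insert_diff_insert hyv hu]
      refine ur_rot_contra hur hN σ3 hadj3 himg3 hl ?_
      rw [s3L, s3fix _ (by simp) (by simp) (by simp)]
      intro hcon
      exact hne (by simpa using matchUniq hm hvz hcon)
    · -- `u` is matched to `f` in `N`: then `N = M'`
      rw [hq1] at hq
      have hfN : (inl (i,1) : XSatV n m) ∈ N.verts := N.edge_vert hq.symm
      have hadj2 : ∀ w ∈ N.verts, (xsatGraph c).Adj (σ1 w) (σ1 (mpartner hN w)) := by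
        intro w hw
        by_cases h1 : w = inl (i,2)
        · subst h1
          rw [mpartner_eq hN hq, hσ1, Equiv.swap_apply_right,
            Equiv.swap_apply_of_ne_of_ne (by simp) (by simp [Fin.ext_iff])]
          exact (adj_fleaf ha).symm
        by_cases h2 : w = inl (i,1)
        · subst h2
          rw [mpartner_eq hN hq.symm, hσ1, Equiv.swap_apply_right,
            Equiv.swap_apply_of_ne_of_ne (by simp) (by simp [Fin.ext_iff])]
          exact adj_fleaf ha
        · have hwy : w ≠ inr (j, some i) := fun hh => hyN (hh ▸ hw)
          rw [s1fix w hwy h1, s1fix _ (mpartner_ne_of_nmem hN hyN hw)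
            (mpartner_ne_of_adj hN hq h2)]
          exact N.adj_sub (mpartner_adj hN hw)
      obtain ⟨N', hN'm, hN'v, hfwd2, hbwd2, -⟩ := rot_matching' hN σ1 hadj2
      have hN'verts : N'.verts = M.verts := by
        rw [hN'v, hσ1, Equiv.swap_comm, swap_image_of_mem_not_mem huN hyN, hNverts,
          insert_diff_insert hyv hu]
      have hNM : N' = M := hur.2 N' hN'm hN'verts
      refine (matching_eq hM'm hN hNv.symm ?_).symm
      intro a b hab
      have h1 : M.Adj (σ1.symm a) (σ1.symm b) := hbwd1 a b hab
      rw [← hNM] at h1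
      have h3 := hbwd2 _ _ h1
      simpa [hσ1, Equiv.symm_swap, Equiv.swap_apply_self] using h3
  -- counting: `M'` has the same size but one fewer cross edge
  have hcross : {p : (Fin n × Fin 3) × (Fin m × Option (Fin n)) |
        M'.Adj (inl p.1) (inr p.2)} =
      {p : (Fin n × Fin 3) × (Fin m × Option (Fin n)) | M.Adj (inl p.1) (inr p.2)} \
        {((i,1),(j, some i))} := by
    ext ⟨p1, p2⟩
    simp only [Set.mem_setOf_eq, Set.mem_diff, Set.mem_singleton_iff]
    constructor
    · intro hp
      have hM := hbwd1 _ _ hp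
      rw [hσ1, Equiv.symm_swap] at hM
      by_cases hp1 : (inl p1 : XSatV n m) = inl (i,2)
      · exfalso
        rw [hp1, Equiv.swap_apply_right] at hM
        by_cases hp2 : (inr p2 : XSatV n m) = inr (j, some i)
        · rw [hp2, Equiv.swap_apply_left] at hM
          exact hu (M.edge_vert hM.symm)
        · rw [Equiv.swap_apply_of_ne_of_ne hp2 (by simp)] at hM
          exact absurd (matchUniq hm hxy.symm hM) (by simp)
      · rw [Equiv.swap_apply_of_ne_of_ne (by simp) hp1] at hM
        by_cases hp2 : (inr p2 : XSatV n m) = inr (j, some i)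
        · exfalso
          rw [hp2, Equiv.swap_apply_left] at hM
          exact hu (M.edge_vert hM.symm)
        · rw [Equiv.swap_apply_of_ne_of_ne hp2 (by simp)] at hM
          exact ⟨hM, fun hh => hp2 (congrArg (fun q => (inr q.2 : XSatV n m)) hh)⟩
    · rintro ⟨hp, hne'⟩
      have hp1 : (inl p1 : XSatV n m) ≠ inl (i,2) := fun hh => hu (hh ▸ M.edge_vert hp)
      have hp2 : (inr p2 : XSatV n m) ≠ inr (j, some i) := by
        intro hh
        rw [hh] at hp
        have := matchUniq hm hxy.symm hp.symm
        exact hne' (Prod.ext (by simpa using this.symm) (by simpa using hh))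
      have := hfwd1 _ _ hp
      rwa [s1fix _ (by simp) hp1, s1fix _ hp2 (by simp)] at this
  have hmem : ((i,1),(j, some i)) ∈
      {p : (Fin n × Fin 3) × (Fin m × Option (Fin n)) | M.Adj (inl p.1) (inr p.2)} := hxy
  have hlt : crossCount M' < crossCount M := by
    rw [crossCount, crossCount, hcross]
    have h1 := Set.ncard_diff_singleton_add_one hmem
    omega
  have hle := hmin M' hM'ur (hcard1.trans hmax)
  omega

/-- The hard case for a cross edge at `t_i`: `t_i y ∈ M` with `y = (j, some i1)`, `i1 ≠ i`,
`v_j z ∈ M` with `z = (j, some i)`, and `u_i` unmatched. -/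
lemma hardT {M : (xsatGraph c).Subgraph}
    (hur : IsURMatching (xsatGraph c) M)
    (hmax : M.edgeSet.ncard = nuUR (xsatGraph c))
    (hmin : ∀ M' : (xsatGraph c).Subgraph, IsURMatching (xsatGraph c) M' →
      M'.edgeSet.ncard = nuUR (xsatGraph c) → crossCount M ≤ crossCount M')
    {j : Fin m} {i i1 : Fin n}
    (ha : i ∈ c j) (hi1 : i1 ∈ c j) (hne1 : i1 ≠ i)
    (hxy : M.Adj (inl (i,0)) (inr (j, some i1)))
    (hvz : M.Adj (inr (j,none)) (inr (j, some i)))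
    (hu : (inl (i,2) : XSatV n m) ∉ M.verts) : False := by
  classical
  have hm := hur.1
  have hyv : (inr (j, some i1) : XSatV n m) ∈ M.verts := M.edge_vert hxy.symm
  have hvv : (inr (j, none) : XSatV n m) ∈ M.verts := M.edge_vert hvz
  have hzv : (inr (j, some i) : XSatV n m) ∈ M.verts := M.edge_vert hvz.symm
  set σ1 : Equiv.Perm (XSatV n m) := Equiv.swap (inr (j, some i1)) (inl (i,2)) with hσ1
  have s1fix : ∀ x : XSatV n m, x ≠ inr (j, some i1) → x ≠ inl (i,2) → σ1 x = x :=
    fun x h1 h2 => Equiv.swap_apply_of_ne_of_ne h1 h2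
  have hadj1 : ∀ w ∈ M.verts, (xsatGraph c).Adj (σ1 w) (σ1 (mpartner hm w)) := by
    intro w hw
    by_cases h1 : w = inl (i,0)
    · subst h1
      rw [mpartner_eq hm hxy, hσ1, Equiv.swap_apply_left,
        Equiv.swap_apply_of_ne_of_ne (by simp) (by simp [Fin.ext_iff])]
      exact (adj_uf i 0 (by decide)).symm
    by_cases h2 : w = inr (j, some i1)
    · subst h2
      rw [mpartner_eq hm hxy.symm, hσ1, Equiv.swap_apply_left,
        Equiv.swap_apply_of_ne_of_ne (by simp) (by simp [Fin.ext_iff])]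
      exact adj_uf i 0 (by decide)
    · have hwu : w ≠ inl (i,2) := fun hh => hu (hh ▸ hw)
      rw [s1fix w h2 hwu, s1fix _ (mpartner_ne_of_adj hm hxy.symm h1)
        (mpartner_ne_of_nmem hm hu hw)]
      exact M.adj_sub (mpartner_adj hm hw)
  obtain ⟨M', hM'm, hM'v, hfwd1, hbwd1, hcard1⟩ := rot_matching' hm σ1 hadj1
  have hM'verts : M'.verts = insert (inl (i,2)) (M.verts \ {inr (j, some i1)}) := by
    rw [hM'v, hσ1]; exact swap_image_of_mem_not_mem hyv hu
  have hM'ur : IsURMatching (xsatGraph c) M' := by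
    refine ⟨hM'm, fun N hN hNv => ?_⟩
    have hNverts : N.verts = insert (inl (i,2)) (M.verts \ {inr (j, some i1)}) :=
      hNv.trans hM'verts
    have hyN : (inr (j, some i1) : XSatV n m) ∉ N.verts := by
      rw [hNverts]; simp
    have huN : (inl (i,2) : XSatV n m) ∈ N.verts := by rw [hNverts]; simp
    have hq := mpartner_adj hN huN
    rcases adj_u (N.adj_sub hq) with hq0 | hq1
    · -- `u` is matched to `t` in `N`: then `N = M'`
      rw [hq0] at hq
      have hadj2 : ∀ w ∈ N.verts, (xsatGraph c).Adj (σ1 w) (σ1 (mpartner hN w)) := by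
        intro w hw
        by_cases h1 : w = inl (i,2)
        · subst h1
          rw [mpartner_eq hN hq, hσ1, Equiv.swap_apply_right,
            Equiv.swap_apply_of_ne_of_ne (by simp) (by simp [Fin.ext_iff])]
          exact (adj_tleaf hi1 ha hne1).symm
        by_cases h2 : w = inl (i,0)
        · subst h2
          rw [mpartner_eq hN hq.symm, hσ1, Equiv.swap_apply_right,
            Equiv.swap_apply_of_ne_of_ne (by simp) (by simp [Fin.ext_iff])]
          exact adj_tleaf hi1 ha hne1
        · have hwy : w ≠ inr (j, some i1) := fun hh => hyN (hh ▸ hw)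
          rw [s1fix w hwy h1, s1fix _ (mpartner_ne_of_nmem hN hyN hw)
            (mpartner_ne_of_adj hN hq h2)]
          exact N.adj_sub (mpartner_adj hN hw)
      obtain ⟨N', hN'm, hN'v, hfwd2, hbwd2, -⟩ := rot_matching' hN σ1 hadj2
      have hN'verts : N'.verts = M.verts := by
        rw [hN'v, hσ1, Equiv.swap_comm, swap_image_of_mem_not_mem huN hyN, hNverts,
          insert_diff_insert hyv hu]
      have hNM : N' = M := hur.2 N' hN'm hN'verts
      refine (matching_eq hM'm hN hNv.symm ?_).symm
      intro a b hab
      have h1 : M.Adj (σ1.symm a) (σ1.symm b) := hbwd1 a b hab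
      rw [← hNM] at h1
      have h3 := hbwd2 _ _ h1
      simpa [hσ1, Equiv.symm_swap, Equiv.swap_apply_self] using h3
    · -- `u` is matched to `f` in `N`: impossible
      exfalso
      rw [hq1] at hq
      have hzy : (inr (j, some i) : XSatV n m) ≠ inr (j, some i1) := by
        simp [Ne.symm hne1]
      have hzN : (inr (j, some i) : XSatV n m) ∈ N.verts := by
        rw [hNverts]; exact Or.inr ⟨hzv, hzy⟩
      have hr := mpartner_adj hN hzN
      rcases adj_leaf (N.adj_sub hr) with hr0 | hr1 | ⟨i₀, hr2, hi₀c, -, hi₀i⟩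
      · -- partner of `z` in `N` is `v_j`
        rw [hr0] at hr
        set σ3 : Equiv.Perm (XSatV n m) :=
          (Equiv.swap (inl (i,2)) (inr (j, some i))).trans
            (Equiv.swap (inl (i,2)) (inr (j, some i1))) with hσ3
        have s3u : σ3 (inl (i,2)) = inr (j, some i) := by
          rw [hσ3, Equiv.trans_apply, Equiv.swap_apply_left,
            Equiv.swap_apply_of_ne_of_ne (by simp) hzy]
        have s3z : σ3 (inr (j, some i)) = inr (j, some i1) := by
          rw [hσ3, Equiv.trans_apply, Equiv.swap_apply_right, Equiv.swap_apply_left]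
        have s3fix : ∀ x : XSatV n m, x ≠ inl (i,2) → x ≠ inr (j, some i) →
            x ≠ inr (j, some i1) → σ3 x = x := by
          intro x hx1 hx2 hx3
          rw [hσ3, Equiv.trans_apply, Equiv.swap_apply_of_ne_of_ne hx1 hx2,
            Equiv.swap_apply_of_ne_of_ne hx1 hx3]
        have hadj3 : ∀ w ∈ N.verts, (xsatGraph c).Adj (σ3 w) (σ3 (mpartner hN w)) := by
          intro w hw
          by_cases h1 : w = inl (i,2)
          · subst h1
            rw [mpartner_eq hN hq, s3u, s3fix _ (by simp [Fin.ext_iff]) (by simp) (by simp)]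
            exact (adj_fleaf ha).symm
          by_cases h2 : w = inl (i,1)
          · subst h2
            rw [mpartner_eq hN hq.symm, s3u,
              s3fix _ (by simp [Fin.ext_iff]) (by simp) (by simp)]
            exact adj_fleaf ha
          by_cases h3 : w = inr (j, none)
          · subst h3
            rw [mpartner_eq hN hr.symm, s3z, s3fix _ (by simp) (by simp) (by simp)]
            exact adj_vleaf hi1
          by_cases h4 : w = inr (j, some i)
          · subst h4
            rw [mpartner_eq hN hr, s3z, s3fix _ (by simp) (by simp) (by simp)]
            exact (adj_vleaf hi1).symm
          · have hwy : w ≠ inr (j, some i1) := fun hh => hyN (hh ▸ hw)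
            rw [s3fix w h1 h4 hwy, s3fix _ (mpartner_ne_of_adj hN hq h2)
              (mpartner_ne_of_adj hN hr h3) (mpartner_ne_of_nmem hN hyN hw)]
            exact N.adj_sub (mpartner_adj hN hw)
        have himg3 : σ3 '' N.verts = M.verts := by
          rw [hσ3, Equiv.coe_trans, Set.image_comp,
            swap_image_of_mem_mem huN hzN,
            swap_image_of_mem_not_mem huN hyN, hNverts, insert_diff_insert hyv hu]
        refine ur_rot_contra hur hN σ3 hadj3 himg3 hr.symm ?_
        rw [s3z, s3fix _ (by simp) (by simp) (by simp)]
        intro hcon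
        exact hne1 (by simpa using (matchUniq hm hvz hcon).symm)
      · -- partner of `z` in `N` is `f_i`: impossible, `f_i` is matched to `u_i`
        rw [hr1] at hr
        exact absurd (matchUniq hN hr.symm hq.symm) (by simp [Fin.ext_iff])
      · -- partner of `z` in `N` is `t_{i₀}`
        rw [hr2] at hr
        by_cases hI : i₀ = i1
        · -- `i₀ = i1`: 6-swap using the `N`-partner of `v_j`
          rw [hI] at hr
          have hvN : (inr (j, none) : XSatV n m) ∈ N.verts := by
            rw [hNverts]; exact Or.inr ⟨hvv, by simp⟩
          have hl := mpartner_adj hN hvN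
          obtain ⟨w₀, hleq, hw₀⟩ := adj_v (N.adj_sub hl)
          have hlN := mpartner_mem hN hvN
          rw [hleq] at hl hlN
          have hw₀1 : w₀ ≠ i1 := by rintro rfl; exact hyN hlN
          have hw₀i : w₀ ≠ i := by
            rintro rfl
            exact absurd (matchUniq hN hr hl.symm) (by simp)
          set σ3 : Equiv.Perm (XSatV n m) :=
            (Equiv.swap (inl (i,2)) (inr (j, some i))).trans
              ((Equiv.swap (inl (i,2)) (inr (j, some w₀))).trans
                (Equiv.swap (inl (i,2)) (inr (j, some i1)))) with hσ3
          have s3u : σ3 (inl (i,2)) = inr (j, some i) := by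
            rw [hσ3, Equiv.trans_apply, Equiv.trans_apply, Equiv.swap_apply_left,
              Equiv.swap_apply_of_ne_of_ne
                (show (inr (j, some i) : XSatV n m) ≠ inl (i,2) by simp)
                (show (inr (j, some i) : XSatV n m) ≠ inr (j, some w₀) by
                  simp [Ne.symm hw₀i]),
              Equiv.swap_apply_of_ne_of_ne
                (show (inr (j, some i) : XSatV n m) ≠ inl (i,2) by simp)
                (show (inr (j, some i) : XSatV n m) ≠ inr (j, some i1) by
                  simp [Ne.symm hne1])]
          have s3z : σ3 (inr (j, some i)) = inr (j, some w₀) := by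
            rw [hσ3, Equiv.trans_apply, Equiv.trans_apply, Equiv.swap_apply_right,
              Equiv.swap_apply_left,
              Equiv.swap_apply_of_ne_of_ne (by simp) (by simp [hw₀1])]
          have s3L : σ3 (inr (j, some w₀)) = inr (j, some i1) := by
            rw [hσ3, Equiv.trans_apply, Equiv.trans_apply,
              Equiv.swap_apply_of_ne_of_ne
                (show (inr (j, some w₀) : XSatV n m) ≠ inl (i,2) by simp)
                (show (inr (j, some w₀) : XSatV n m) ≠ inr (j, some i) by simp [hw₀i]),
              Equiv.swap_apply_right, Equiv.swap_apply_left]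
          have s3fix : ∀ x : XSatV n m, x ≠ inl (i,2) → x ≠ inr (j, some i) →
              x ≠ inr (j, some w₀) → x ≠ inr (j, some i1) → σ3 x = x := by
            intro x hx1 hx2 hx3 hx4
            rw [hσ3, Equiv.trans_apply, Equiv.trans_apply,
              Equiv.swap_apply_of_ne_of_ne hx1 hx2, Equiv.swap_apply_of_ne_of_ne hx1 hx3,
              Equiv.swap_apply_of_ne_of_ne hx1 hx4]
          have hadj3 : ∀ w ∈ N.verts, (xsatGraph c).Adj (σ3 w) (σ3 (mpartner hN w)) := by
            intro w hw
            by_cases h1 : w = inl (i,2)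
            · subst h1
              rw [mpartner_eq hN hq, s3u,
                s3fix _ (by simp [Fin.ext_iff]) (by simp) (by simp) (by simp)]
              exact (adj_fleaf ha).symm
            by_cases h2 : w = inl (i,1)
            · subst h2
              rw [mpartner_eq hN hq.symm, s3u,
                s3fix _ (by simp [Fin.ext_iff]) (by simp) (by simp) (by simp)]
              exact adj_fleaf ha
            by_cases h3 : w = inr (j, none)
            · subst h3
              rw [mpartner_eq hN hl, s3L,
                s3fix _ (by simp) (by simp) (by simp) (by simp)]
              exact adj_vleaf hi1
            by_cases h4 : w = inr (j, some w₀)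
            · subst h4
              rw [mpartner_eq hN hl.symm, s3L,
                s3fix _ (by simp) (by simp) (by simp) (by simp)]
              exact (adj_vleaf hi1).symm
            by_cases h5 : w = inr (j, some i)
            · subst h5
              rw [mpartner_eq hN hr, s3z,
                s3fix _ (by simp [Fin.ext_iff]) (by simp) (by simp) (by simp)]
              exact (adj_tleaf hw₀ hi1 hw₀1).symm
            by_cases h6 : w = inl (i1, 0)
            · subst h6
              rw [mpartner_eq hN hr.symm, s3z,
                s3fix _ (by simp) (by simp) (by simp) (by simp)]
              exact adj_tleaf hw₀ hi1 hw₀1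
            · have hwy : w ≠ inr (j, some i1) := fun hh => hyN (hh ▸ hw)
              rw [s3fix w h1 h5 h4 hwy, s3fix _ (mpartner_ne_of_adj hN hq h2)
                (mpartner_ne_of_adj hN hr h6) (mpartner_ne_of_adj hN hl.symm h3)
                (mpartner_ne_of_nmem hN hyN hw)]
              exact N.adj_sub (mpartner_adj hN hw)
          have himg3 : σ3 '' N.verts = M.verts := by
            rw [hσ3, Equiv.coe_trans, Set.image_comp, Equiv.coe_trans, Set.image_comp,
              swap_image_of_mem_mem huN hzN, swap_image_of_mem_mem huN hlN,
              swap_image_of_mem_not_mem huN hyN, hNverts, insert_diff_insert hyv hu]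
          refine ur_rot_contra hur hN σ3 hadj3 himg3 hl ?_
          rw [s3L, s3fix _ (by simp) (by simp) (by simp) (by simp)]
          intro hcon
          exact hne1 (by simpa using (matchUniq hm hvz hcon).symm)
        · -- `i₀ ∉ {i, i1}`: 4-swap
          set σ3 : Equiv.Perm (XSatV n m) :=
            (Equiv.swap (inl (i,2)) (inr (j, some i))).trans
              (Equiv.swap (inl (i,2)) (inr (j, some i1))) with hσ3
          have s3u : σ3 (inl (i,2)) = inr (j, some i) := by
            rw [hσ3, Equiv.trans_apply, Equiv.swap_apply_left,
              Equiv.swap_apply_of_ne_of_ne (by simp) hzy]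
          have s3z : σ3 (inr (j, some i)) = inr (j, some i1) := by
            rw [hσ3, Equiv.trans_apply, Equiv.swap_apply_right, Equiv.swap_apply_left]
          have s3fix : ∀ x : XSatV n m, x ≠ inl (i,2) → x ≠ inr (j, some i) →
              x ≠ inr (j, some i1) → σ3 x = x := by
            intro x hx1 hx2 hx3
            rw [hσ3, Equiv.trans_apply, Equiv.swap_apply_of_ne_of_ne hx1 hx2,
              Equiv.swap_apply_of_ne_of_ne hx1 hx3]
          have hadj3 : ∀ w ∈ N.verts, (xsatGraph c).Adj (σ3 w) (σ3 (mpartner hN w)) := by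
            intro w hw
            by_cases h1 : w = inl (i,2)
            · subst h1
              rw [mpartner_eq hN hq, s3u,
                s3fix _ (by simp [Fin.ext_iff]) (by simp) (by simp)]
              exact (adj_fleaf ha).symm
            by_cases h2 : w = inl (i,1)
            · subst h2
              rw [mpartner_eq hN hq.symm, s3u,
                s3fix _ (by simp [Fin.ext_iff]) (by simp) (by simp)]
              exact adj_fleaf ha
            by_cases h3 : w = inl (i₀, 0)
            · subst h3
              rw [mpartner_eq hN hr.symm, s3z,
                s3fix _ (by simp [Fin.ext_iff, hi₀i]) (by simp) (by simp)]
              exact adj_tleaf hi1 hi₀c (Ne.symm hI)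
            by_cases h4 : w = inr (j, some i)
            · subst h4
              rw [mpartner_eq hN hr, s3z,
                s3fix _ (by simp [Fin.ext_iff]) (by simp) (by simp)]
              exact (adj_tleaf hi1 hi₀c (Ne.symm hI)).symm
            · have hwy : w ≠ inr (j, some i1) := fun hh => hyN (hh ▸ hw)
              rw [s3fix w h1 h4 hwy, s3fix _ (mpartner_ne_of_adj hN hq h2)
                (mpartner_ne_of_adj hN hr h3) (mpartner_ne_of_nmem hN hyN hw)]
              exact N.adj_sub (mpartner_adj hN hw)
          have himg3 : σ3 '' N.verts = M.verts := by
            rw [hσ3, Equiv.coe_trans, Set.image_comp,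
              swap_image_of_mem_mem huN hzN,
              swap_image_of_mem_not_mem huN hyN, hNverts, insert_diff_insert hyv hu]
          refine ur_rot_contra hur hN σ3 hadj3 himg3 hr.symm ?_
          rw [s3z, s3fix _ (by simp [Fin.ext_iff, hi₀i]) (by simp) (by simp)]
          intro hcon
          exact hi₀i (by simpa using (matchUniq hm hxy.symm hcon.symm).symm)
  -- counting
  have hcross : {p : (Fin n × Fin 3) × (Fin m × Option (Fin n)) |
        M'.Adj (inl p.1) (inr p.2)} =
      {p : (Fin n × Fin 3) × (Fin m × Option (Fin n)) | M.Adj (inl p.1) (inr p.2)} \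
        {((i,0),(j, some i1))} := by
    ext ⟨p1, p2⟩
    simp only [Set.mem_setOf_eq, Set.mem_diff, Set.mem_singleton_iff]
    constructor
    · intro hp
      have hM := hbwd1 _ _ hp
      rw [hσ1, Equiv.symm_swap] at hM
      by_cases hp1 : (inl p1 : XSatV n m) = inl (i,2)
      · exfalso
        rw [hp1, Equiv.swap_apply_right] at hM
        by_cases hp2 : (inr p2 : XSatV n m) = inr (j, some i1)
        · rw [hp2, Equiv.swap_apply_left] at hM
          exact hu (M.edge_vert hM.symm)
        · rw [Equiv.swap_apply_of_ne_of_ne hp2 (by simp)] at hM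
          exact absurd (matchUniq hm hxy.symm hM) (by simp)
      · rw [Equiv.swap_apply_of_ne_of_ne (by simp) hp1] at hM
        by_cases hp2 : (inr p2 : XSatV n m) = inr (j, some i1)
        · exfalso
          rw [hp2, Equiv.swap_apply_left] at hM
          exact hu (M.edge_vert hM.symm)
        · rw [Equiv.swap_apply_of_ne_of_ne hp2 (by simp)] at hM
          exact ⟨hM, fun hh => hp2 (congrArg (fun q => (inr q.2 : XSatV n m)) hh)⟩
    · rintro ⟨hp, hne'⟩
      have hp1 : (inl p1 : XSatV n m) ≠ inl (i,2) := fun hh => hu (hh ▸ M.edge_vert hp)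
      have hp2 : (inr p2 : XSatV n m) ≠ inr (j, some i1) := by
        intro hh
        rw [hh] at hp
        have := matchUniq hm hxy.symm hp.symm
        exact hne' (Prod.ext (by simpa using this.symm) (by simpa using hh))
      have := hfwd1 _ _ hp
      rwa [s1fix _ (by simp) hp1, s1fix _ hp2 (by simp)] at this
  have hmem : ((i,0),(j, some i1)) ∈
      {p : (Fin n × Fin 3) × (Fin m × Option (Fin n)) | M.Adj (inl p.1) (inr p.2)} := hxy
  have hlt : crossCount M' < crossCount M := by
    rw [crossCount, crossCount, hcross]
    have h1 := Set.ncard_diff_singleton_add_one hmem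
    omega
  have hle := hmin M' hM'ur (hcard1.trans hmax)
  omega

end hard

/-- Let `M = M₁ ∪ M₂ ∪ M₃` be a maximum uniquely restricted matching in `G(Γ)` with `M₁`
contained in the edge sets of the `X_i`'s, `M₂` contained in the edge sets of the `C_j`'s, and
`M₃` contained in the set of edges between `∪ᵢ X_i` and its complement, chosen minimizing `|M₃|`.
If `j ∈ [m]` is such that `M₃` contains an edge incident with `C_j`, then `M₂` contains no edge
of the star on `C_j`. (Since every edge of `G(Γ)` lies within some `X_i`, within some `C_j`, or
crosses between the two sides, the decomposition is determined by `M` itself, and `|M₃|` is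
`crossCount M`.) -/
theorem no_star_edge_in_Cj_of_cross_edge {n m : ℕ} (c : Fin m → Finset (Fin n))
    (hcard : ∀ j, (c j).card = 3)
    (hocc : ∀ i : Fin n, (Finset.univ.filter fun j => i ∈ c j).card ≤ 3)
    (M : (xsatGraph c).Subgraph) (hur : IsURMatching (xsatGraph c) M)
    (hmax : M.edgeSet.ncard = nuUR (xsatGraph c))
    (hmin : ∀ M' : (xsatGraph c).Subgraph, IsURMatching (xsatGraph c) M' →
      M'.edgeSet.ncard = nuUR (xsatGraph c) → crossCount M ≤ crossCount M')
    (j : Fin m)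
    (hj : ∃ (o : Option (Fin n)) (w : Fin n × Fin 3), M.Adj (Sum.inr (j, o)) (Sum.inl w)) :
    ∀ o o' : Option (Fin n), ¬ M.Adj (Sum.inr (j, o)) (Sum.inr (j, o')) := by
  intro o o' hoo'
  classical
  have hm := hur.1
  have hstar : ∃ i'', i'' ∈ c j ∧
      M.Adj (Sum.inr (j, none)) (Sum.inr (j, some i'')) := by
    rcases (adj_rr (M.adj_sub hoo')).2 with ⟨ho, i'', ho', hi''⟩ | ⟨ho', i'', ho, hi''⟩
    · rw [ho, ho'] at hoo'; exact ⟨i'', hi'', hoo'⟩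
    · rw [ho, ho'] at hoo'; exact ⟨i'', hi'', hoo'.symm⟩
  obtain ⟨i'', hi'', hvz⟩ := hstar
  obtain ⟨o₀, ⟨a, k⟩, hc0⟩ := hj
  rcases adj_rl (M.adj_sub hc0) with ⟨hk, ho₀, ha⟩ | ⟨hk, i1, ho₀, hi1, ha, hne1⟩
  · -- the cross edge is `f_a y` with `y = (j, some a)`
    subst hk
    rw [ho₀] at hc0
    have hxy : M.Adj (Sum.inl (a,1)) (Sum.inr (j, some a)) := hc0.symm
    have hne : i'' ≠ a := by
      rintro rfl
      exact absurd (matchUniq hm hc0 hvz.symm) (by simp)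
    by_cases hu : (Sum.inl (a,2) : XSatV n m) ∈ M.verts
    · -- `u_a` is matched, necessarily to `t_a`; 6-rotation kills unique restriction
      have hpu := mpartner_adj hm hu
      have hut : M.Adj (Sum.inl (a,2)) (Sum.inl (a,0)) := by
        rcases adj_u (M.adj_sub hpu) with h0 | h1
        · rwa [h0] at hpu
        · rw [h1] at hpu
          exact absurd (matchUniq hm hpu.symm hxy) (by simp)
      set σ : Equiv.Perm (XSatV n m) :=
        (Equiv.swap (Sum.inr (j, none)) (Sum.inl (a,0))).trans
          (Equiv.swap (Sum.inl (a,1)) (Sum.inr (j, none))) with hσ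
      have sf : σ (Sum.inl (a,1)) = Sum.inr (j, none) := by
        rw [hσ, Equiv.trans_apply,
          Equiv.swap_apply_of_ne_of_ne (show (Sum.inl (a,1) : XSatV n m) ≠ _ by simp)
            (show (Sum.inl (a,1) : XSatV n m) ≠ Sum.inl (a,0) by simp [Fin.ext_iff]),
          Equiv.swap_apply_left]
      have sv : σ (Sum.inr (j, none)) = Sum.inl (a,0) := by
        rw [hσ, Equiv.trans_apply, Equiv.swap_apply_left,
          Equiv.swap_apply_of_ne_of_ne
            (show (Sum.inl (a,0) : XSatV n m) ≠ Sum.inl (a,1) by simp [Fin.ext_iff])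
            (by simp)]
      have st : σ (Sum.inl (a,0)) = Sum.inl (a,1) := by
        rw [hσ, Equiv.trans_apply, Equiv.swap_apply_right, Equiv.swap_apply_right]
      have sfix : ∀ x : XSatV n m, x ≠ Sum.inl (a,1) → x ≠ Sum.inr (j, none) →
          x ≠ Sum.inl (a,0) → σ x = x := by
        intro x h1 h2 h3
        rw [hσ, Equiv.trans_apply, Equiv.swap_apply_of_ne_of_ne h2 h3,
          Equiv.swap_apply_of_ne_of_ne h1 h2]
      have hadj : ∀ w ∈ M.verts, (xsatGraph c).Adj (σ w) (σ (mpartner hm w)) := by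
        intro w hw
        by_cases h1 : w = Sum.inl (a,1)
        · subst h1
          rw [mpartner_eq hm hxy, sf, sfix _ (by simp) (by simp) (by simp)]
          exact adj_vleaf ha
        by_cases h2 : w = Sum.inr (j, some a)
        · subst h2
          rw [mpartner_eq hm hxy.symm, sf, sfix _ (by simp) (by simp) (by simp)]
          exact (adj_vleaf ha).symm
        by_cases h3 : w = Sum.inr (j, none)
        · subst h3
          rw [mpartner_eq hm hvz, sv, sfix _ (by simp) (by simp) (by simp)]
          exact adj_tleaf hi'' ha hne
        by_cases h4 : w = Sum.inr (j, some i'')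
        · subst h4
          rw [mpartner_eq hm hvz.symm, sv, sfix _ (by simp) (by simp) (by simp)]
          exact (adj_tleaf hi'' ha hne).symm
        by_cases h5 : w = Sum.inl (a,0)
        · subst h5
          rw [mpartner_eq hm hut.symm, st,
            sfix _ (by simp [Fin.ext_iff]) (by simp) (by simp [Fin.ext_iff])]
          exact (adj_uf a 1 (by decide)).symm
        by_cases h6 : w = Sum.inl (a,2)
        · subst h6
          rw [mpartner_eq hm hut, st,
            sfix _ (by simp [Fin.ext_iff]) (by simp) (by simp [Fin.ext_iff])]
          exact adj_uf a 1 (by decide)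
        · rw [sfix w h1 h3 h5, sfix _ (mpartner_ne_of_adj hm hxy h2)
            (mpartner_ne_of_adj hm hvz h4) (mpartner_ne_of_adj hm hut.symm h6)]
          exact M.adj_sub (mpartner_adj hm hw)
      have himg : σ '' M.verts = M.verts := by
        rw [hσ, Equiv.coe_trans, Set.image_comp,
          swap_image_of_mem_mem (M.edge_vert hvz) (M.edge_vert hut.symm),
          swap_image_of_mem_mem (M.edge_vert hxy) (M.edge_vert hvz)]
      refine ur_rot_contra hur hm σ hadj himg hxy ?_
      rw [sf, sfix _ (by simp) (by simp) (by simp)]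
      intro hcon
      exact hne (by simpa using matchUniq hm hvz hcon)
    · exact hardF hur hmax hmin ha hi'' hne hxy hvz hu
  · -- the cross edge is `t_a y` with `y = (j, some i1)`, `i1 ≠ a`
    subst hk
    rw [ho₀] at hc0
    have hxy : M.Adj (Sum.inl (a,0)) (Sum.inr (j, some i1)) := hc0.symm
    have hney : i'' ≠ i1 := by
      rintro rfl
      exact absurd (matchUniq hm hc0 hvz.symm) (by simp)
    by_cases hia : i'' = a
    · rw [hia] at hvz hney
      by_cases hu : (Sum.inl (a,2) : XSatV n m) ∈ M.verts
      · -- `u_a` is matched, necessarily to `f_a`; 6-rotation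
        have hpu := mpartner_adj hm hu
        have huf : M.Adj (Sum.inl (a,2)) (Sum.inl (a,1)) := by
          rcases adj_u (M.adj_sub hpu) with h0 | h1
          · rw [h0] at hpu
            exact absurd (matchUniq hm hpu.symm hxy) (by simp)
          · rwa [h1] at hpu
        set σ : Equiv.Perm (XSatV n m) :=
          (Equiv.swap (Sum.inr (j, none)) (Sum.inl (a,1))).trans
            (Equiv.swap (Sum.inl (a,0)) (Sum.inr (j, none))) with hσ
        have st : σ (Sum.inl (a,0)) = Sum.inr (j, none) := by
          rw [hσ, Equiv.trans_apply,
            Equiv.swap_apply_of_ne_of_ne (show (Sum.inl (a,0) : XSatV n m) ≠ _ by simp)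
              (show (Sum.inl (a,0) : XSatV n m) ≠ Sum.inl (a,1) by simp [Fin.ext_iff]),
            Equiv.swap_apply_left]
        have sv : σ (Sum.inr (j, none)) = Sum.inl (a,1) := by
          rw [hσ, Equiv.trans_apply, Equiv.swap_apply_left,
            Equiv.swap_apply_of_ne_of_ne
              (show (Sum.inl (a,1) : XSatV n m) ≠ Sum.inl (a,0) by simp [Fin.ext_iff])
              (by simp)]
        have sf : σ (Sum.inl (a,1)) = Sum.inl (a,0) := by
          rw [hσ, Equiv.trans_apply, Equiv.swap_apply_right, Equiv.swap_apply_right]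
        have sfix : ∀ x : XSatV n m, x ≠ Sum.inl (a,0) → x ≠ Sum.inr (j, none) →
            x ≠ Sum.inl (a,1) → σ x = x := by
          intro x h1 h2 h3
          rw [hσ, Equiv.trans_apply, Equiv.swap_apply_of_ne_of_ne h2 h3,
            Equiv.swap_apply_of_ne_of_ne h1 h2]
        have hadj : ∀ w ∈ M.verts, (xsatGraph c).Adj (σ w) (σ (mpartner hm w)) := by
          intro w hw
          by_cases h1 : w = Sum.inl (a,0)
          · subst h1
            rw [mpartner_eq hm hxy, st, sfix _ (by simp) (by simp) (by simp)]
            exact adj_vleaf hi1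
          by_cases h2 : w = Sum.inr (j, some i1)
          · subst h2
            rw [mpartner_eq hm hxy.symm, st, sfix _ (by simp) (by simp) (by simp)]
            exact (adj_vleaf hi1).symm
          by_cases h3 : w = Sum.inr (j, none)
          · subst h3
            rw [mpartner_eq hm hvz, sv, sfix _ (by simp) (by simp) (by simp)]
            exact adj_fleaf ha
          by_cases h4 : w = Sum.inr (j, some a)
          · subst h4
            rw [mpartner_eq hm hvz.symm, sv, sfix _ (by simp) (by simp) (by simp)]
            exact (adj_fleaf ha).symm
          by_cases h5 : w = Sum.inl (a,1)
          · subst h5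
            rw [mpartner_eq hm huf.symm, sf,
              sfix _ (by simp [Fin.ext_iff]) (by simp) (by simp [Fin.ext_iff])]
            exact (adj_uf a 0 (by decide)).symm
          by_cases h6 : w = Sum.inl (a,2)
          · subst h6
            rw [mpartner_eq hm huf, sf,
              sfix _ (by simp [Fin.ext_iff]) (by simp) (by simp [Fin.ext_iff])]
            exact adj_uf a 0 (by decide)
          · rw [sfix w h1 h3 h5, sfix _ (mpartner_ne_of_adj hm hxy h2)
              (mpartner_ne_of_adj hm hvz h4) (mpartner_ne_of_adj hm huf.symm h6)]
            exact M.adj_sub (mpartner_adj hm hw)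
        have himg : σ '' M.verts = M.verts := by
          rw [hσ, Equiv.coe_trans, Set.image_comp,
            swap_image_of_mem_mem (M.edge_vert hvz) (M.edge_vert huf.symm),
            swap_image_of_mem_mem (M.edge_vert hxy) (M.edge_vert hvz)]
        refine ur_rot_contra hur hm σ hadj himg hxy ?_
        rw [st, sfix _ (by simp) (by simp) (by simp)]
        intro hcon
        exact hney (by simpa using matchUniq hm hvz hcon)
      · exact hardT hur hmax hmin ha hi1 hne1 hxy hvz hu
    · -- `i'' ∉ {a, i1}`: 4-rotation
      set σ : Equiv.Perm (XSatV n m) :=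
        Equiv.swap (Sum.inr (j, some i1)) (Sum.inr (j, some i'')) with hσ
      have sy : σ (Sum.inr (j, some i1)) = Sum.inr (j, some i'') :=
        Equiv.swap_apply_left _ _
      have sz : σ (Sum.inr (j, some i'')) = Sum.inr (j, some i1) :=
        Equiv.swap_apply_right _ _
      have sfix : ∀ x : XSatV n m, x ≠ Sum.inr (j, some i1) → x ≠ Sum.inr (j, some i'') →
          σ x = x := fun x h1 h2 => Equiv.swap_apply_of_ne_of_ne h1 h2
      have hadj : ∀ w ∈ M.verts, (xsatGraph c).Adj (σ w) (σ (mpartner hm w)) := by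
        intro w hw
        by_cases h1 : w = Sum.inl (a,0)
        · subst h1
          rw [mpartner_eq hm hxy, sy, sfix _ (by simp) (by simp)]
          exact adj_tleaf hi'' ha hia
        by_cases h2 : w = Sum.inr (j, some i1)
        · subst h2
          rw [mpartner_eq hm hxy.symm, sy, sfix _ (by simp) (by simp)]
          exact (adj_tleaf hi'' ha hia).symm
        by_cases h3 : w = Sum.inr (j, none)
        · subst h3
          rw [mpartner_eq hm hvz, sz, sfix _ (by simp) (by simp)]
          exact adj_vleaf hi1
        by_cases h4 : w = Sum.inr (j, some i'')
        · subst h4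
          rw [mpartner_eq hm hvz.symm, sz, sfix _ (by simp) (by simp)]
          exact (adj_vleaf hi1).symm
        · rw [sfix w h2 h4, sfix _ (mpartner_ne_of_adj hm hxy.symm h1)
            (mpartner_ne_of_adj hm hvz.symm h3)]
          exact M.adj_sub (mpartner_adj hm hw)
      have himg : σ '' M.verts = M.verts := by
        rw [hσ]
        exact swap_image_of_mem_mem (M.edge_vert hxy.symm) (M.edge_vert hvz.symm)
      refine ur_rot_contra hur hm σ hadj himg hvz ?_
      rw [sz, sfix _ (by simp) (by simp)]
      intro hcon
      exact absurd (matchUniq hm hxy.symm hcon.symm) (by simp)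
end

section
/- If t: {x_1,…,x_n} → {0,1} is a truth assignment such that every clause of Γ contains exactly one literal that is true under t, then the matching M that arises from {u_i f_i : i ∈ [n], t(x_i) = 0} ∪ {u_i t_i : i ∈ [n], t(x_i) = 1} by adding, for each j ∈ [m], the edge v_j v where v ∈ C_j is identified with the unique literal of c_j that is true under t, is an induced matching in G(Γ) of size n+m. -/
open SimpleGraph

/-- The matching arising from `{u_i f_i : t(x_i) = 0} ∪ {u_i t_i : t(x_i) = 1}` by adding, for
each `j ∈ [m]`, the edge `v_j v` where `v = Sum.inr (j, some (g j))` is identified with the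
unique literal of `c_j` that is true under `t`. -/
def M15 {n m : ℕ} (c : Fin m → Finset (Fin n)) (t : Fin n → Bool) (g : Fin m → Fin n) :
    (xsatGraph c).Subgraph :=
  pairsSubgraph (xsatGraph c)
    ({pr | ∃ i : Fin n, (t i = false ∧ pr = (Sum.inl (i, 2), Sum.inl (i, 1))) ∨
        (t i = true ∧ pr = (Sum.inl (i, 2), Sum.inl (i, 0)))} ∪
     {pr | ∃ j : Fin m, pr = (Sum.inr (j, none), Sum.inr (j, some (g j)))})

section Aux

variable {n m : ℕ}

/-- Matching partner function. -/
def m15P (t : Fin n → Bool) (g : Fin m → Fin n) : XSatV n m → XSatV n m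
  | Sum.inl (i, k) => Sum.inl (i, if k = 2 then (if t i then 0 else 1) else 2)
  | Sum.inr (j, none) => Sum.inr (j, some (g j))
  | Sum.inr (j, some _) => Sum.inr (j, none)

lemma m15_if_ne_2 (t : Fin n → Bool) (i : Fin n) :
    (if t i then (0 : Fin 3) else 1) ≠ 2 := by split <;> decide

lemma m15_adj_iff (c : Fin m → Finset (Fin n)) (t : Fin n → Bool) (g : Fin m → Fin n)
    (hg : ∀ j, g j ∈ c j) (a b : XSatV n m) :
    (M15 c t g).Adj a b ↔
      (∃ i : Fin n,
        (a = Sum.inl (i, 2) ∧ b = Sum.inl (i, if t i then 0 else 1)) ∨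
        (b = Sum.inl (i, 2) ∧ a = Sum.inl (i, if t i then 0 else 1))) ∨
      (∃ j : Fin m,
        (a = Sum.inr (j, none) ∧ b = Sum.inr (j, some (g j))) ∨
        (b = Sum.inr (j, none) ∧ a = Sum.inr (j, some (g j)))) := by
  have hmem : ∀ x y : XSatV n m,
      ((x, y) ∈ ({pr | ∃ i : Fin n, (t i = false ∧ pr = (Sum.inl (i, 2), Sum.inl (i, 1))) ∨
        (t i = true ∧ pr = (Sum.inl (i, 2), Sum.inl (i, 0)))} ∪
        {pr | ∃ j : Fin m, pr = (Sum.inr (j, none), Sum.inr (j, some (g j)))} :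
          Set (XSatV n m × XSatV n m))) ↔
      ((∃ i : Fin n, x = Sum.inl (i, 2) ∧ y = Sum.inl (i, if t i then 0 else 1)) ∨
        (∃ j : Fin m, x = Sum.inr (j, none) ∧ y = Sum.inr (j, some (g j)))) := by
    intro x y
    constructor
    · rintro (⟨i, (⟨hti, he⟩ | ⟨hti, he⟩)⟩ | ⟨j, he⟩)
      · exact Or.inl ⟨i, by simp_all [Prod.ext_iff]⟩
      · exact Or.inl ⟨i, by simp_all [Prod.ext_iff]⟩
      · exact Or.inr ⟨j, by simp_all [Prod.ext_iff]⟩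
    · rintro (⟨i, hx, hy⟩ | ⟨j, hx, hy⟩)
      · cases hti : t i with
        | false => exact Or.inl ⟨i, Or.inl ⟨hti, by simp_all [Prod.ext_iff]⟩⟩
        | true => exact Or.inl ⟨i, Or.inr ⟨hti, by simp_all [Prod.ext_iff]⟩⟩
      · exact Or.inr ⟨j, by simp_all [Prod.ext_iff]⟩
  constructor
  · rintro ⟨hadj, hm⟩
    rcases hm with hm | hm
    · rcases (hmem a b).1 hm with ⟨i, hx, hy⟩ | ⟨j, hx, hy⟩
      · exact Or.inl ⟨i, Or.inl ⟨hx, hy⟩⟩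
      · exact Or.inr ⟨j, Or.inl ⟨hx, hy⟩⟩
    · rcases (hmem b a).1 hm with ⟨i, hx, hy⟩ | ⟨j, hx, hy⟩
      · exact Or.inl ⟨i, Or.inr ⟨hx, hy⟩⟩
      · exact Or.inr ⟨j, Or.inr ⟨hx, hy⟩⟩
  · have hadj1 : ∀ i : Fin n,
        (xsatGraph c).Adj (Sum.inl (i, 2)) (Sum.inl (i, if t i then 0 else 1)) := by
      intro i
      cases hti : t i <;> simp [xsatGraph, xsatRel, hti]
    have hadj2 : ∀ j : Fin m,
        (xsatGraph c).Adj (Sum.inr (j, none)) (Sum.inr (j, some (g j))) := by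
      intro j
      simp [xsatGraph, xsatRel, hg j]
    rintro (⟨i, ⟨ha, hb⟩ | ⟨hb, ha⟩⟩ | ⟨j, ⟨ha, hb⟩ | ⟨hb, ha⟩⟩)
    · subst ha; subst hb
      exact ⟨hadj1 i, Or.inl ((hmem _ _).2 (Or.inl ⟨i, rfl, rfl⟩))⟩
    · subst ha; subst hb
      exact ⟨(hadj1 i).symm, Or.inr ((hmem _ _).2 (Or.inl ⟨i, rfl, rfl⟩))⟩
    · subst ha; subst hb
      exact ⟨hadj2 j, Or.inl ((hmem _ _).2 (Or.inr ⟨j, rfl, rfl⟩))⟩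
    · subst ha; subst hb
      exact ⟨(hadj2 j).symm, Or.inr ((hmem _ _).2 (Or.inr ⟨j, rfl, rfl⟩))⟩

lemma m15_adj_partner (c : Fin m → Finset (Fin n)) (t : Fin n → Bool) (g : Fin m → Fin n)
    (hg : ∀ j, g j ∈ c j) {a b : XSatV n m} (h : (M15 c t g).Adj a b) :
    b = m15P t g a := by
  rcases (m15_adj_iff c t g hg a b).1 h with
    ⟨i, ⟨ha, hb⟩ | ⟨hb, ha⟩⟩ | ⟨j, ⟨ha, hb⟩ | ⟨hb, ha⟩⟩
  · subst ha; subst hb; simp [m15P]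
  · subst ha; subst hb
    have := m15_if_ne_2 t i
    cases hti : t i <;> simp_all [m15P]
  · subst ha; subst hb; simp [m15P]
  · subst ha; subst hb; simp [m15P]

lemma m15_mem_verts_iff (c : Fin m → Finset (Fin n)) (t : Fin n → Bool) (g : Fin m → Fin n)
    (v : XSatV n m) :
    v ∈ (M15 c t g).verts ↔ ∃ a b, (M15 c t g).Adj a b ∧ (v = a ∨ v = b) := Iff.rfl

lemma m15_verts_iff (c : Fin m → Finset (Fin n)) (t : Fin n → Bool) (g : Fin m → Fin n)
    (hg : ∀ j, g j ∈ c j) (v : XSatV n m) :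
    v ∈ (M15 c t g).verts ↔
      (∃ i : Fin n, v = Sum.inl (i, 2) ∨ v = Sum.inl (i, if t i then 0 else 1)) ∨
      (∃ j : Fin m, v = Sum.inr (j, none) ∨ v = Sum.inr (j, some (g j))) := by
  rw [m15_mem_verts_iff]
  constructor
  · rintro ⟨a, b, hadj, hv⟩
    rcases (m15_adj_iff c t g hg a b).1 hadj with
      ⟨i, ⟨ha, hb⟩ | ⟨hb, ha⟩⟩ | ⟨j, ⟨ha, hb⟩ | ⟨hb, ha⟩⟩ <;>
      rcases hv with rfl | rfl <;>
      [exact Or.inl ⟨i, Or.inl ha⟩; exact Or.inl ⟨i, Or.inr hb⟩;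
       exact Or.inl ⟨i, Or.inr ha⟩; exact Or.inl ⟨i, Or.inl hb⟩;
       exact Or.inr ⟨j, Or.inl ha⟩; exact Or.inr ⟨j, Or.inr hb⟩;
       exact Or.inr ⟨j, Or.inr ha⟩; exact Or.inr ⟨j, Or.inl hb⟩]
  · rintro (⟨i, rfl | rfl⟩ | ⟨j, rfl | rfl⟩)
    · exact ⟨_, _, (m15_adj_iff c t g hg _ _).2 (Or.inl ⟨i, Or.inl ⟨rfl, rfl⟩⟩), Or.inl rfl⟩
    · exact ⟨_, _, (m15_adj_iff c t g hg _ _).2 (Or.inl ⟨i, Or.inl ⟨rfl, rfl⟩⟩), Or.inr rfl⟩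
    · exact ⟨_, _, (m15_adj_iff c t g hg _ _).2 (Or.inr ⟨j, Or.inl ⟨rfl, rfl⟩⟩), Or.inl rfl⟩
    · exact ⟨_, _, (m15_adj_iff c t g hg _ _).2 (Or.inr ⟨j, Or.inl ⟨rfl, rfl⟩⟩), Or.inr rfl⟩

lemma m15_isMatching (c : Fin m → Finset (Fin n)) (t : Fin n → Bool) (g : Fin m → Fin n)
    (hg : ∀ j, g j ∈ c j) : (M15 c t g).IsMatching := by
  intro v hv
  rcases (m15_mem_verts_iff c t g v).1 hv with ⟨a, b, hadj, rfl | rfl⟩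
  · exact ⟨b, hadj, fun w hw => (m15_adj_partner c t g hg hw).trans
      (m15_adj_partner c t g hg hadj).symm⟩
  · exact ⟨a, hadj.symm, fun w hw => (m15_adj_partner c t g hg hw).trans
      (m15_adj_partner c t g hg hadj.symm).symm⟩

lemma m15_induced_key (c : Fin m → Finset (Fin n)) (t : Fin n → Bool) (g : Fin m → Fin n)
    (ht : ∀ j, ∃! i, i ∈ c j ∧ t i = true) (hg : ∀ j, g j ∈ c j ∧ t (g j) = true)
    {a b : XSatV n m} (ha : a ∈ (M15 c t g).verts) (hb : b ∈ (M15 c t g).verts)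
    (hadj : (xsatGraph c).Adj a b) : (M15 c t g).Adj a b := by
  have hg1 : ∀ j, g j ∈ c j := fun j => (hg j).1
  rw [m15_adj_iff c t g hg1]
  rcases (m15_verts_iff c t g hg1 a).1 ha with ⟨i, rfl | rfl⟩ | ⟨j, rfl | rfl⟩ <;>
    rcases (m15_verts_iff c t g hg1 b).1 hb with ⟨i', rfl | rfl⟩ | ⟨j', rfl | rfl⟩ <;>
    simp only [xsatGraph, fromRel_adj, xsatRel] at hadj
  · -- u i, u i'
    simp at hadj
  · -- u i, p i'
    obtain ⟨hne, h | h⟩ := hadj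
    · obtain ⟨rfl, -, -⟩ := h
      exact Or.inl ⟨i, Or.inl ⟨rfl, rfl⟩⟩
    · exact absurd h.2.1 (m15_if_ne_2 t i')
  · -- u i, v j'
    simp at hadj
  · -- u i, w j'
    obtain ⟨hne, h | h⟩ := hadj
    · rcases h with ⟨h, -⟩ | ⟨h, -⟩ <;> exact absurd h (by decide)
    · exact h.elim
  · -- p i, u i'
    obtain ⟨hne, h | h⟩ := hadj
    · exact absurd h.2.1 (m15_if_ne_2 t i)
    · obtain ⟨h1, -, -⟩ := h
      exact Or.inl ⟨i, Or.inr ⟨by rw [h1], rfl⟩⟩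
  · -- p i, p i'
    obtain ⟨hne, h | h⟩ := hadj
    · exact absurd h.2.1 (m15_if_ne_2 t i)
    · exact absurd h.2.1 (m15_if_ne_2 t i')
  · -- p i, v j'
    obtain ⟨hne, h | h⟩ := hadj
    · rcases h with ⟨-, h, -⟩ | ⟨-, i', h, -⟩ <;> simp at h
    · exact h.elim
  · -- p i, w j' : the crucial case
    exfalso
    obtain ⟨hne, h | h⟩ := hadj
    · rcases h with ⟨h1, h2, h3⟩ | ⟨h0, i'', h2, h3, h4, h5⟩
      · -- t i = false but g j' = i has t true
        have hti : t i = false := by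
          by_contra hc
          simp only [Bool.not_eq_false] at hc
          rw [if_pos hc] at h1
          exact absurd h1 (by decide)
        obtain rfl : g j' = i := by simpa using h2
        rw [(hg j').2] at hti; exact absurd hti (by decide)
      · -- t i = true, i ∈ c j', i ≠ g j' : contradicts uniqueness
        have hti : t i = true := by
          by_contra hc
          simp only [Bool.not_eq_true] at hc
          rw [if_neg (by simp [hc])] at h0
          exact absurd h0 (by decide)
        obtain rfl : g j' = i'' := by simpa using h2
        obtain ⟨iu, -, hu⟩ := ht j'
        have e1 : g j' = iu := hu _ ⟨h3, (hg j').2⟩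
        have e2 : i = iu := hu _ ⟨h4, hti⟩
        exact h5 (e1.trans e2.symm)
    · exact h.elim
  · -- v j, u i'
    simp at hadj
  · -- v j, p i'
    obtain ⟨hne, h | h⟩ := hadj
    · exact h.elim
    · rcases h with ⟨-, h, -⟩ | ⟨-, i'', h, -⟩ <;> simp at h
  · -- v j, v j'
    simp at hadj
  · -- v j, w j'
    obtain ⟨hne, h | h⟩ := hadj
    · obtain ⟨rfl, -, -⟩ := h
      exact Or.inr ⟨j, Or.inl ⟨rfl, rfl⟩⟩
    · simp at h
  · -- w j, u i'
    obtain ⟨hne, h | h⟩ := hadj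
    · exact h.elim
    · rcases h with ⟨h, -⟩ | ⟨h, -⟩ <;> exact absurd h (by decide)
  · -- w j, p i'
    exfalso
    obtain ⟨hne, h | h⟩ := hadj
    · exact h.elim
    · rcases h with ⟨h1, h2, h3⟩ | ⟨h0, i'', h2, h3, h4, h5⟩
      · have hti : t i' = false := by
          by_contra hc
          simp only [Bool.not_eq_false] at hc
          rw [if_pos hc] at h1
          exact absurd h1 (by decide)
        obtain rfl : g j = i' := by simpa using h2
        rw [(hg j).2] at hti; exact absurd hti (by decide)
      · have hti : t i' = true := by
          by_contra hc
          simp only [Bool.not_eq_true] at hc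
          rw [if_neg (by simp [hc])] at h0
          exact absurd h0 (by decide)
        obtain rfl : g j = i'' := by simpa using h2
        obtain ⟨iu, -, hu⟩ := ht j
        have e1 : g j = iu := hu _ ⟨h3, (hg j).2⟩
        have e2 : i' = iu := hu _ ⟨h4, hti⟩
        exact h5 (e1.trans e2.symm)
  · -- w j, v j'
    obtain ⟨hne, h | h⟩ := hadj
    · simp at h
    · obtain ⟨h1, -, -⟩ := h
      exact Or.inr ⟨j, Or.inr ⟨by rw [h1], rfl⟩⟩
  · -- w j, w j'
    obtain ⟨hne, h | h⟩ := hadj <;> simp at h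

end Aux

/-- If `t` is a truth assignment such that every clause of `Γ` contains exactly one literal that
is true under `t`, then the matching arising from `{u_i f_i : t(x_i) = 0} ∪ {u_i t_i : t(x_i) = 1}`
by adding, for each `j ∈ [m]`, the edge `v_j v` where `v ∈ C_j` is identified with the unique
literal of `c_j` that is true under `t`, is an induced matching in `G(Γ)` of size `n + m`. -/
theorem m15_isInducedMatching {n m : ℕ} (c : Fin m → Finset (Fin n))
    (hcard : ∀ j, (c j).card = 3)
    (hocc : ∀ i : Fin n, (Finset.univ.filter fun j => i ∈ c j).card ≤ 3)
    (t : Fin n → Bool) (ht : ∀ j, ∃! i, i ∈ c j ∧ t i = true)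
    (g : Fin m → Fin n) (hg : ∀ j, g j ∈ c j ∧ t (g j) = true) :
    IsInducedMatching (xsatGraph c) (M15 c t g) ∧ (M15 c t g).edgeSet.ncard = n + m := by
  
  have hg1 : ∀ j, g j ∈ c j := fun j => (hg j).1
  have hmatch := m15_isMatching c t g hg1
  refine ⟨⟨hmatch, ?_⟩, ?_⟩
  · rintro ⟨v, hv⟩
    obtain ⟨w, hw, hu⟩ := hmatch hv
    have hwv : w ∈ (M15 c t g).verts := hw.snd_mem
    refine ⟨⟨w, hwv⟩, hw.adj_sub, ?_⟩
    rintro ⟨w', hw'⟩ hadj'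
    have hG : (xsatGraph c).Adj v w' := hadj'
    have : (M15 c t g).Adj v w' := m15_induced_key c t g ht hg hv hw' hG
    exact Subtype.ext (hu _ this)
  · have hset : (M15 c t g).edgeSet =
        (Set.range fun i : Fin n =>
          s(Sum.inl (i, 2), (Sum.inl (i, if t i then 0 else 1) : XSatV n m))) ∪
        (Set.range fun j : Fin m =>
          s(Sum.inr (j, none), (Sum.inr (j, some (g j)) : XSatV n m))) := by
      ext e
      induction e with
      | _ a b =>
        rw [SimpleGraph.Subgraph.mem_edgeSet, m15_adj_iff c t g hg1]
        simp only [Set.mem_union, Set.mem_range, Sym2.eq_iff]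
        constructor
        · rintro (⟨i, ⟨ha, hb⟩ | ⟨hb, ha⟩⟩ | ⟨j, ⟨ha, hb⟩ | ⟨hb, ha⟩⟩)
          · exact Or.inl ⟨i, Or.inl ⟨ha.symm, hb.symm⟩⟩
          · exact Or.inl ⟨i, Or.inr ⟨hb.symm, ha.symm⟩⟩
          · exact Or.inr ⟨j, Or.inl ⟨ha.symm, hb.symm⟩⟩
          · exact Or.inr ⟨j, Or.inr ⟨hb.symm, ha.symm⟩⟩
        · rintro (⟨i, ⟨ha, hb⟩ | ⟨ha, hb⟩⟩ | ⟨j, ⟨ha, hb⟩ | ⟨ha, hb⟩⟩)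
          · exact Or.inl ⟨i, Or.inl ⟨ha.symm, hb.symm⟩⟩
          · exact Or.inl ⟨i, Or.inr ⟨ha.symm, hb.symm⟩⟩
          · exact Or.inr ⟨j, Or.inl ⟨ha.symm, hb.symm⟩⟩
          · exact Or.inr ⟨j, Or.inr ⟨ha.symm, hb.symm⟩⟩
    rw [hset]
    have finj : Function.Injective (fun i : Fin n =>
        s(Sum.inl (i, 2), (Sum.inl (i, if t i then 0 else 1) : XSatV n m))) := by
      intro i i' hE
      simp only [Sym2.eq_iff, Sum.inl.injEq, Prod.mk.injEq] at hE
      rcases hE with ⟨⟨h, -⟩, -⟩ | ⟨⟨-, h⟩, -⟩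
      · exact h
      · exact absurd h.symm (m15_if_ne_2 t i')
    have hinj : Function.Injective (fun j : Fin m =>
        s(Sum.inr (j, none), (Sum.inr (j, some (g j)) : XSatV n m))) := by
      intro j j' hE
      simp only [Sym2.eq_iff, Sum.inr.injEq, Prod.mk.injEq] at hE
      rcases hE with ⟨⟨h, -⟩, -⟩ | ⟨⟨-, h⟩, -⟩
      · exact h
      · exact absurd h (by simp)
    have hdisj : Disjoint
        (Set.range fun i : Fin n =>
          s(Sum.inl (i, 2), (Sum.inl (i, if t i then 0 else 1) : XSatV n m)))
        (Set.range fun j : Fin m =>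
          s(Sum.inr (j, none), (Sum.inr (j, some (g j)) : XSatV n m))) := by
      rw [Set.disjoint_left]
      rintro e ⟨i, rfl⟩ ⟨j, he⟩
      simp only [Sym2.eq_iff] at he
      rcases he with ⟨h, -⟩ | ⟨h, -⟩ <;> exact absurd h (by simp)
    rw [Set.ncard_union_eq hdisj (Set.finite_range _) (Set.finite_range _),
      ← Set.image_univ, ← Set.image_univ, Set.ncard_image_of_injective _ finj,
      Set.ncard_image_of_injective _ hinj, Set.ncard_univ, Set.ncard_univ,
      Nat.card_eq_fintype_card, Nat.card_eq_fintype_card, Fintype.card_fin, Fintype.card_fin]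
end
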